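/- arXiv:2105.04852 — 5 statements merged into one kernel-verified Lean document; each statement's English description precedes it below -/
import Mathlib

section
/- Let 1 ≤ p < ∞, k ≥ 1, and let μ ∈ M^p be a measure whose support contains at least k points. Then the following two quantities are strictly positive: D_min := inf over optimal codebooks c* ∈ C_k and over pairs 1 ≤ j ≠ j' ≤ k+1 of ‖c_j* − c_{j'}*‖ (where c_{k+1}* := ∂Ω and the distance of a point to ∂Ω is its Euclidean distance to the diagonal), and m_min := inf over optimal codebooks c* ∈ C_k and over 1 ≤ j ≤ k of μ(V_j(c*)). -/
open MeasureTheory ENNReal Set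

noncomputable section

abbrev E2 := EuclideanSpace ℝ (Fin 2)

/-- The open half-plane `Ω` above the diagonal. -/
def Omega : Set E2 := {x | x 0 < x 1}

/-- The diagonal `∂Ω`. -/
def diagSet : Set E2 := {x | x 0 = x 1}

/-- `Ω̄ = Ω ∪ ∂Ω`. -/
def OmegaBar : Set E2 := Omega ∪ diagSet

/-- Euclidean distance of a point to the diagonal. -/
def dDiag (x : E2) : ℝ := Metric.infDist x diagSet

/-- Total persistence `Pers_p(μ) = ∫_Ω ‖x-∂Ω‖^p dμ(x)`. -/
def Pers (p : ℝ) (μ : Measure E2) : ℝ≥0∞ :=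
  ∫⁻ x in Omega, ENNReal.ofReal (dDiag x ^ p) ∂μ

/-- Admissible partial transport plans: measures on `Ω̄ × Ω̄` whose first (resp. second)
marginal coincides with `μ` (resp. `ν`) on `Ω`. -/
def Adm (μ ν : Measure E2) : Set (Measure (E2 × E2)) :=
  {π | (π.map Prod.fst).restrict Omega = μ.restrict Omega ∧
       (π.map Prod.snd).restrict Omega = ν.restrict Omega ∧
       π ((OmegaBar ×ˢ OmegaBar)ᶜ) = 0}

/-- `OT_p(μ,ν)^p`, the optimal partial transport cost. -/
def OTpow (p : ℝ) (μ ν : Measure E2) : ℝ≥0∞ :=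
  ⨅ π ∈ Adm μ ν, ∫⁻ z, ENNReal.ofReal (dist z.1 z.2 ^ p) ∂π

/-- The distance `OT_p(μ,ν)`. -/
def OTp (p : ℝ) (μ ν : Measure E2) : ℝ≥0∞ := (OTpow p μ ν) ^ (1/p)

/-- The closed ℓ¹-ball `A_L` of radius `L/√2` centered at `(-L/√8, L/√8)`. -/
def ballA (L : ℝ) : Set E2 :=
  {x | |x 0 + L / Real.sqrt 8| + |x 1 - L / Real.sqrt 8| ≤ L / Real.sqrt 2}

/-- Membership in `M^q_{L,M}`: supported in `Ω`, in `A_L`, with `Pers_q ≤ M`. -/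
def MemMq (q L M : ℝ) (μ : Measure E2) : Prop :=
  μ Omegaᶜ = 0 ∧ μ (ballA L)ᶜ = 0 ∧ Pers q μ ≤ ENNReal.ofReal M

/-- Empirical EPD `μ̄_n = (1/n)(μ₁ + ⋯ + μ_n)` of a sample of `n` persistence measures. -/
def empEPD (n : ℕ) (ω : Fin n → Measure E2) : Measure E2 :=
  (n : ℝ≥0∞)⁻¹ • ∑ i : Fin n, ω i

/-- Distance from `x` to the `j`-th centroid, the last index standing for the diagonal. -/
def cdistC (k : ℕ) (c : Fin k → E2) (j : Fin (k+1)) (x : E2) : ℝ :=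
  if h : (j : ℕ) < k then dist x (c ⟨j, h⟩) else dDiag x

/-- Voronoi cells `V_j(c)` (the last cell being the diagonal cell `V_{k+1}`). -/
def Vcell (k : ℕ) (c : Fin k → E2) (j : Fin (k+1)) : Set E2 :=
  {x ∈ Omega | (∀ j' : Fin (k+1), j' < j → cdistC k c j x ≤ cdistC k c j' x) ∧
               (∀ j' : Fin (k+1), j < j' → cdistC k c j x < cdistC k c j' x)}

/-- The distortion `R_{k,p}(c)`. -/
def distortion (p : ℝ) (μ : Measure E2) (k : ℕ) (c : Fin k → E2) : ℝ≥0∞ :=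
  (∑ j : Fin (k+1), ∫⁻ x in Vcell k c j, ENNReal.ofReal (cdistC k c j x ^ p) ∂μ) ^ (1/p)

/-- The optimal distortion `R_k^* = inf {R_{k,p}(c) : c ∈ Ω̄^k}`. -/
def Rstar (p : ℝ) (μ : Measure E2) (k : ℕ) : ℝ≥0∞ :=
  ⨅ (c : Fin k → E2) (_ : ∀ j, c j ∈ OmegaBar), distortion p μ k c

/-- The set `C_k` of optimal codebooks. -/
def Copt (p : ℝ) (μ : Measure E2) (k : ℕ) : Set (Fin k → E2) :=
  {c | (∀ j, c j ∈ OmegaBar) ∧ distortion p μ k c = Rstar p μ k}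

/-- Support of a measure. -/
def msupport (μ : Measure E2) : Set E2 :=
  {x | ∀ U : Set E2, IsOpen U → x ∈ U → 0 < μ U}

/-- Euclidean distance between codebooks seen as vectors of `ℝ^{2k}`. -/
def cbDist (k : ℕ) (c c' : Fin k → E2) : ℝ :=
  Real.sqrt (∑ j : Fin k, dist (c j) (c' j) ^ 2)

/-- Euclidean norm on `(ℝ²)^k`. -/
def pnorm2 (k : ℕ) (v : Fin k → E2) : ℝ := Real.sqrt (∑ j : Fin k, ‖v j‖ ^ 2)

/-- Distance between the `j`-th and `j'`-th centroids, the last index standing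
for the diagonal. -/
def cdistPt (k : ℕ) (c : Fin k → E2) (j j' : Fin (k+1)) : ℝ :=
  if h : (j : ℕ) < k then
    (if h' : (j' : ℕ) < k then dist (c ⟨j, h⟩) (c ⟨j', h'⟩) else dDiag (c ⟨j, h⟩))
  else (if h' : (j' : ℕ) < k then dDiag (c ⟨j', h'⟩) else 0)

/-- The set `N(c)` of points lying on a boundary between two Voronoi cells. -/
def Nset (k : ℕ) (c : Fin k → E2) : Set E2 :=
  {x ∈ Omega | ∃ j j' : Fin (k+1), j < j' ∧ x ∈ Vcell k c j ∧ cdistC k c j x = cdistC k c j' x}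

/-- The `t`-neighborhood `A^t` of `A` in `Ω`. -/
def tN (A : Set E2) (t : ℝ) : Set E2 := {x ∈ Omega | ∃ a ∈ A, dist x a ≤ t}

/-- `w₂(c, m)_j = ∫_{V_j(c)} x dm(x)`. -/
def w2 (k : ℕ) (c : Fin k → E2) (m : Measure E2) (j : Fin k) : E2 :=
  ∫ x in Vcell k c j.castSucc, x ∂m

/-- Absolute difference in `ℝ≥0∞`. -/
def eabs (a b : ℝ≥0∞) : ℝ≥0∞ := (a - b) + (b - a)

namespace S7

lemma cont_coord (i : Fin 2) : Continuous (fun x : E2 => x i) :=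
  (EuclideanSpace.proj (𝕜 := ℝ) i).continuous
lemma isOpen_Omega : IsOpen Omega := isOpen_lt (cont_coord 0) (cont_coord 1)
lemma isClosed_diag : IsClosed diagSet := isClosed_eq (cont_coord 0) (cont_coord 1)
lemma zero_mem_diag : (0:E2) ∈ diagSet := by simp [diagSet]
lemma diag_nonempty : diagSet.Nonempty := ⟨0, zero_mem_diag⟩
lemma OmegaBar_eq : OmegaBar = {x : E2 | x 0 ≤ x 1} := by
  ext x; simp only [OmegaBar, Omega, diagSet, Set.mem_union, Set.mem_setOf_eq]
  exact ⟨fun h => h.elim le_of_lt le_of_eq, fun h => h.lt_or_eq⟩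
lemma isClosed_OmegaBar : IsClosed OmegaBar := by
  rw [OmegaBar_eq]; exact isClosed_le (cont_coord 0) (cont_coord 1)
lemma dDiag_nonneg (x : E2) : 0 ≤ dDiag x := Metric.infDist_nonneg
lemma dDiag_le_dist {y : E2} (hy : y ∈ diagSet) (x : E2) : dDiag x ≤ dist x y :=
  Metric.infDist_le_dist_of_mem hy
lemma dDiag_lip (x y : E2) : dDiag x ≤ dDiag y + dist x y :=
  Metric.infDist_le_infDist_add_dist
lemma continuous_dDiag : Continuous dDiag := Metric.continuous_infDist_pt _
lemma not_mem_diag_of_mem_Omega {x : E2} (hx : x ∈ Omega) : x ∉ diagSet :=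
  fun h => absurd h (ne_of_lt hx)
lemma dDiag_pos {x : E2} (hx : x ∈ Omega) : 0 < dDiag x :=
  (isClosed_diag.notMem_iff_infDist_pos diag_nonempty).1 (not_mem_diag_of_mem_Omega hx)
lemma mem_diag_of_dDiag_eq_zero {x : E2} (h : dDiag x = 0) : x ∈ diagSet :=
  (isClosed_diag.mem_iff_infDist_zero diag_nonempty).2 h
lemma dDiag_le_norm (x : E2) : dDiag x ≤ ‖x‖ := by
  simpa [dist_zero_right] using dDiag_le_dist zero_mem_diag x
lemma mem_Omega_of_OmegaBar {x : E2} (hx : x ∈ OmegaBar) (hd : x ∉ diagSet) : x ∈ Omega := by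
  rcases hx with h | h
  · exact h
  · exact absurd h hd

lemma cdistC_castSucc {k : ℕ} (c : Fin k → E2) (j : Fin k) (x : E2) :
    cdistC k c j.castSucc x = dist x (c j) := by
  have h : ((j.castSucc : Fin (k+1)) : ℕ) < k := j.isLt
  simp only [cdistC, dif_pos h]
  rfl
lemma cdistC_last {k : ℕ} (c : Fin k → E2) (x : E2) :
    cdistC k c (Fin.last k) x = dDiag x := by
  simp [cdistC]
lemma cdistC_nonneg {k : ℕ} (c : Fin k → E2) (j : Fin (k+1)) (x : E2) :
    0 ≤ cdistC k c j x := by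
  unfold cdistC; split
  · exact dist_nonneg
  · exact dDiag_nonneg x
lemma continuous_cdistC {k : ℕ} (c : Fin k → E2) (j : Fin (k+1)) :
    Continuous (cdistC k c j) := by
  unfold cdistC; split
  · exact Continuous.dist continuous_id continuous_const
  · exact continuous_dDiag
lemma cdistC_lip {k : ℕ} (c : Fin k → E2) (j : Fin (k+1)) (x y : E2) :
    cdistC k c j x ≤ cdistC k c j y + dist x y := by
  unfold cdistC; split
  · next hj => linarith [dist_triangle x y (c ⟨j, hj⟩)]
  · exact dDiag_lip x y
lemma dDiag_le_cdistC_of_mem_diag {k : ℕ} {c : Fin k → E2} {j : Fin (k+1)}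
    (h : ∀ hj : (j:ℕ) < k, c ⟨j, hj⟩ ∈ diagSet) (x : E2) : dDiag x ≤ cdistC k c j x := by
  unfold cdistC; split
  · next hj => exact dDiag_le_dist (h hj) x
  · exact le_rfl

/-- min over all cells incl. diagonal -/
def gfun (k : ℕ) (c : Fin k → E2) (x : E2) : ℝ :=
  Finset.univ.inf' ⟨Fin.last k, Finset.mem_univ _⟩ (fun j => cdistC k c j x)

lemma last_mem_erase {k : ℕ} (j : Fin k) :
    Fin.last k ∈ Finset.univ.erase j.castSucc :=
  Finset.mem_erase.2 ⟨(Fin.castSucc_lt_last j).ne', Finset.mem_univ _⟩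

/-- min over all cells except cell j -/
def gm (k : ℕ) (c : Fin k → E2) (j : Fin k) (x : E2) : ℝ :=
  (Finset.univ.erase j.castSucc).inf' ⟨Fin.last k, last_mem_erase j⟩
    (fun j' => cdistC k c j' x)

lemma gfun_le {k : ℕ} (c : Fin k → E2) (j : Fin (k+1)) (x : E2) :
    gfun k c x ≤ cdistC k c j x := Finset.inf'_le _ (Finset.mem_univ j)
lemma le_gfun {k : ℕ} (c : Fin k → E2) (x : E2) {t : ℝ}
    (h : ∀ j, t ≤ cdistC k c j x) : t ≤ gfun k c x :=
  Finset.le_inf' _ _ (fun j _ => h j)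
lemma gfun_exists_eq {k : ℕ} (c : Fin k → E2) (x : E2) :
    ∃ j, gfun k c x = cdistC k c j x := by
  obtain ⟨j, _, hj⟩ := Finset.exists_mem_eq_inf' (⟨Fin.last k, Finset.mem_univ _⟩ :
    (Finset.univ : Finset (Fin (k+1))).Nonempty) (fun j => cdistC k c j x)
  exact ⟨j, hj⟩
lemma gfun_nonneg {k : ℕ} (c : Fin k → E2) (x : E2) : 0 ≤ gfun k c x :=
  le_gfun c x (fun j => cdistC_nonneg c j x)
lemma gfun_le_dDiag {k : ℕ} (c : Fin k → E2) (x : E2) : gfun k c x ≤ dDiag x := by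
  simpa [cdistC_last] using gfun_le c (Fin.last k) x
lemma gm_le {k : ℕ} (c : Fin k → E2) (j : Fin k) {j' : Fin (k+1)}
    (h : j' ≠ j.castSucc) (x : E2) : gm k c j x ≤ cdistC k c j' x :=
  Finset.inf'_le _ (Finset.mem_erase.2 ⟨h, Finset.mem_univ _⟩)
lemma le_gm {k : ℕ} (c : Fin k → E2) (j : Fin k) (x : E2) {t : ℝ}
    (h : ∀ j' : Fin (k+1), j' ≠ j.castSucc → t ≤ cdistC k c j' x) : t ≤ gm k c j x :=
  Finset.le_inf' _ _ (fun j' hj' => h j' (Finset.mem_erase.1 hj').1)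
lemma gm_exists_eq {k : ℕ} (c : Fin k → E2) (j : Fin k) (x : E2) :
    ∃ j' : Fin (k+1), j' ≠ j.castSucc ∧ gm k c j x = cdistC k c j' x := by
  obtain ⟨j', hj', h⟩ := Finset.exists_mem_eq_inf' (⟨Fin.last k, last_mem_erase j⟩ :
    (Finset.univ.erase j.castSucc).Nonempty) (fun j' => cdistC k c j' x)
  exact ⟨j', (Finset.mem_erase.1 hj').1, h⟩
lemma gm_nonneg {k : ℕ} (c : Fin k → E2) (j : Fin k) (x : E2) : 0 ≤ gm k c j x :=
  le_gm c j x (fun j' _ => cdistC_nonneg c j' x)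
lemma gm_le_dDiag {k : ℕ} (c : Fin k → E2) (j : Fin k) (x : E2) : gm k c j x ≤ dDiag x := by
  simpa [cdistC_last] using gm_le c j (Fin.castSucc_lt_last j).ne' x
lemma gfun_eq_min {k : ℕ} (c : Fin k → E2) (j : Fin k) (x : E2) :
    gfun k c x = min (dist x (c j)) (gm k c j x) := by
  have h : (Finset.univ : Finset (Fin (k+1))) =
      insert j.castSucc (Finset.univ.erase j.castSucc) :=
    (Finset.insert_erase (Finset.mem_univ _)).symm
  rw [gfun]
  rw [Finset.inf'_congr (⟨Fin.last k, Finset.mem_univ _⟩) h (fun _ _ => rfl)]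
  rw [Finset.inf'_insert (⟨Fin.last k, last_mem_erase j⟩)]
  rw [cdistC_castSucc]
  rfl
lemma gfun_lip {k : ℕ} (c : Fin k → E2) (x y : E2) :
    gfun k c x ≤ gfun k c y + dist x y := by
  obtain ⟨j, hj⟩ := gfun_exists_eq c y
  calc gfun k c x ≤ cdistC k c j x := gfun_le c j x
  _ ≤ cdistC k c j y + dist x y := cdistC_lip c j x y
  _ = gfun k c y + dist x y := by rw [hj]
lemma gm_lip {k : ℕ} (c : Fin k → E2) (j : Fin k) (x y : E2) :
    gm k c j x ≤ gm k c j y + dist x y := by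
  obtain ⟨j', hj', h⟩ := gm_exists_eq c j y
  calc gm k c j x ≤ cdistC k c j' x := gm_le c j hj' x
  _ ≤ cdistC k c j' y + dist x y := cdistC_lip c j' x y
  _ = gm k c j y + dist x y := by rw [h]
lemma continuous_gfun {k : ℕ} (c : Fin k → E2) : Continuous (gfun k c) := by
  refine continuous_iff_continuousAt.2 (fun x => ?_)
  exact ContinuousAt.finset_inf'_apply _ (fun j _ => (continuous_cdistC c j).continuousAt)
lemma continuous_gm {k : ℕ} (c : Fin k → E2) (j : Fin k) : Continuous (gm k c j) := by
  refine continuous_iff_continuousAt.2 (fun x => ?_)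
  exact ContinuousAt.finset_inf'_apply _ (fun j' _ => (continuous_cdistC c j').continuousAt)


lemma measurableSet_Omega : MeasurableSet Omega := isOpen_Omega.measurableSet

lemma measurableSet_Vcell {k : ℕ} (c : Fin k → E2) (j : Fin (k+1)) :
    MeasurableSet (Vcell k c j) := by
  have : Vcell k c j = Omega ∩ ⋂ j' : Fin (k+1),
      ({x | j' < j → cdistC k c j x ≤ cdistC k c j' x} ∩
       {x | j < j' → cdistC k c j x < cdistC k c j' x}) := by
    ext x
    simp only [Vcell, Set.mem_inter_iff, Set.mem_iInter, Set.mem_setOf_eq, Set.mem_sep_iff]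
    constructor
    · rintro ⟨h0, h1, h2⟩; exact ⟨h0, fun i => ⟨h1 i, h2 i⟩⟩
    · rintro ⟨h0, h⟩; exact ⟨h0, fun i hi => (h i).1 hi, fun i hi => (h i).2 hi⟩
  rw [this]
  refine measurableSet_Omega.inter (MeasurableSet.iInter (fun j' => MeasurableSet.inter ?_ ?_))
  · by_cases h : j' < j
    · simp only [h, forall_true_left]
      exact measurableSet_le (continuous_cdistC c j).measurable (continuous_cdistC c j').measurable
    · simp only [h, false_implies]
      exact MeasurableSet.univ.congr (by ext x; simp)
  · by_cases h : j < j'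
    · simp only [h, forall_true_left]
      exact measurableSet_lt (continuous_cdistC c j).measurable (continuous_cdistC c j').measurable
    · simp only [h, false_implies]
      exact MeasurableSet.univ.congr (by ext x; simp)

lemma Vcell_subset_Omega {k : ℕ} (c : Fin k → E2) (j : Fin (k+1)) :
    Vcell k c j ⊆ Omega := fun _ hx => hx.1

lemma Vcell_disjoint {k : ℕ} (c : Fin k → E2) {j j' : Fin (k+1)} (h : j ≠ j') :
    Disjoint (Vcell k c j) (Vcell k c j') := by
  wlog hlt : j < j' generalizing j j'
  · exact (this h.symm ((h.lt_or_gt).resolve_left hlt)).symm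
  refine Set.disjoint_left.2 (fun x hx hx' => ?_)
  have h1 := hx.2.2 j' hlt
  have h2 := hx'.2.1 j hlt
  linarith

lemma Vcell_union {k : ℕ} (c : Fin k → E2) :
    ⋃ j ∈ (Finset.univ : Finset (Fin (k+1))), Vcell k c j = Omega := by
  apply Set.Subset.antisymm
  · exact Set.iUnion₂_subset (fun j _ => Vcell_subset_Omega c j)
  · intro x hx
    classical
    set T := Finset.univ.filter (fun j : Fin (k+1) => cdistC k c j x = gfun k c x) with hT
    have hTne : T.Nonempty := by
      obtain ⟨j, hj⟩ := gfun_exists_eq c x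
      exact ⟨j, Finset.mem_filter.2 ⟨Finset.mem_univ _, hj.symm⟩⟩
    set j₀ := T.max' hTne with hj₀
    have hj₀T : j₀ ∈ T := T.max'_mem hTne
    have hj₀e : cdistC k c j₀ x = gfun k c x := (Finset.mem_filter.1 hj₀T).2
    refine Set.mem_biUnion (Finset.mem_univ j₀) ?_
    refine ⟨hx, fun j' _ => ?_, fun j' hj' => ?_⟩
    · rw [hj₀e]; exact gfun_le c j' x
    · rcases lt_or_eq_of_le (hj₀e ▸ gfun_le c j' x) with h | h
      · exact h
      · exact absurd (T.le_max' j' (Finset.mem_filter.2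
          ⟨Finset.mem_univ _, h.symm.trans hj₀e⟩)) (not_le_of_gt hj')

lemma gfun_eq_on_Vcell {k : ℕ} (c : Fin k → E2) (j : Fin (k+1)) {x : E2}
    (hx : x ∈ Vcell k c j) : gfun k c x = cdistC k c j x := by
  refine le_antisymm (gfun_le c j x) (le_gfun c x (fun j' => ?_))
  rcases lt_trichotomy j' j with h | h | h
  · exact hx.2.1 j' h
  · rw [h]
  · exact le_of_lt (hx.2.2 j' h)

/-- the distortion to the p-th power, as a single integral -/
def Ffun (p : ℝ) (μ : Measure E2) (k : ℕ) (c : Fin k → E2) : ℝ≥0∞ :=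
  ∫⁻ x in Omega, ENNReal.ofReal (gfun k c x ^ p) ∂μ

lemma distortion_eq (p : ℝ) (μ : Measure E2) (k : ℕ) (c : Fin k → E2) :
    distortion p μ k c = (Ffun p μ k c) ^ (1/p) := by
  unfold distortion Ffun
  congr 1
  have h1 : ∀ j : Fin (k+1), ∫⁻ x in Vcell k c j, ENNReal.ofReal (cdistC k c j x ^ p) ∂μ
      = ∫⁻ x in Vcell k c j, ENNReal.ofReal (gfun k c x ^ p) ∂μ := by
    intro j
    refine setLIntegral_congr_fun (measurableSet_Vcell c j) (fun x hx => ?_)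
    rw [gfun_eq_on_Vcell c j hx]
  rw [Finset.sum_congr rfl (fun j _ => h1 j)]
  rw [← lintegral_biUnion_finset (f := fun x => ENNReal.ofReal (gfun k c x ^ p))
      (fun j _ j' _ h => Vcell_disjoint c h) (fun j _ => measurableSet_Vcell c j)]
  rw [Vcell_union]

def RF (p : ℝ) (μ : Measure E2) (k : ℕ) : ℝ≥0∞ :=
  ⨅ (c : Fin k → E2) (_ : ∀ j, c j ∈ OmegaBar), Ffun p μ k c

lemma rpow_iInf {ι : Sort*} (f : ι → ℝ≥0∞) {q : ℝ} (hq : 0 < q) :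
    (⨅ i, f i) ^ q = ⨅ i, (f i) ^ q := by
  have h := map_iInf (ENNReal.orderIsoRpow q hq) f
  simp only [ENNReal.orderIsoRpow_apply] at h
  exact h

lemma Rstar_eq (p : ℝ) (hp : 1 ≤ p) (μ : Measure E2) (k : ℕ) :
    Rstar p μ k = (RF p μ k) ^ (1/p) := by
  have h0 : (0:ℝ) < 1/p := by positivity
  unfold Rstar RF
  rw [rpow_iInf _ h0]
  refine iInf_congr (fun c => ?_)
  rw [rpow_iInf _ h0]
  exact iInf_congr (fun _ => by rw [distortion_eq])

lemma Copt_iff (p : ℝ) (hp : 1 ≤ p) (μ : Measure E2) (k : ℕ) (c : Fin k → E2) :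
    c ∈ Copt p μ k ↔ (∀ j, c j ∈ OmegaBar) ∧ Ffun p μ k c = RF p μ k := by
  have h0 : (0:ℝ) < 1/p := by positivity
  unfold Copt
  rw [Set.mem_setOf_eq, distortion_eq, Rstar_eq p hp]
  constructor
  · rintro ⟨h1, h2⟩
    refine ⟨h1, (ENNReal.orderIsoRpow (1/p) h0).injective ?_⟩
    simpa [ENNReal.orderIsoRpow_apply] using h2
  · rintro ⟨h1, h2⟩
    exact ⟨h1, by rw [h2]⟩


lemma continuous_rpow_const {p : ℝ} (hp0 : 0 < p) : Continuous (fun t : ℝ => t ^ p) :=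
  continuous_iff_continuousAt.2 fun x => Real.continuousAt_rpow_const x p (Or.inr hp0.le)

lemma measurable_ofReal_rpow {p : ℝ} (hp0 : 0 < p) {g : E2 → ℝ} (hg : Continuous g) :
    Measurable (fun x => ENNReal.ofReal (g x ^ p)) :=
  (((continuous_rpow_const hp0).comp hg).measurable).ennreal_ofReal

lemma Ffun_le_Pers {p : ℝ} (hp0 : 0 < p) (μ : Measure E2) {k : ℕ} (c : Fin k → E2) :
    Ffun p μ k c ≤ Pers p μ := by
  refine lintegral_mono (fun x => ?_)
  exact ENNReal.ofReal_le_ofReal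
    (Real.rpow_le_rpow (gfun_nonneg c x) (gfun_le_dDiag c x) (le_of_lt hp0))

lemma zero_mem_OmegaBar : (0:E2) ∈ OmegaBar := Or.inr zero_mem_diag

lemma RF_le {p : ℝ} {μ : Measure E2} {k : ℕ} {c : Fin k → E2}
    (hc : ∀ j, c j ∈ OmegaBar) : RF p μ k ≤ Ffun p μ k c :=
  (iInf_le _ c).trans (iInf_le _ hc)

lemma RF_lt_top {p : ℝ} (hp0 : 0 < p) {μ : Measure E2} (hμp : Pers p μ < ⊤) (k : ℕ) :
    RF p μ k < ⊤ :=
  lt_of_le_of_lt ((RF_le (fun _ => zero_mem_OmegaBar)).trans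
    (Ffun_le_Pers hp0 μ (fun _ => (0:E2)))) hμp

lemma exists_support_point {μ : Measure E2} {U : Set E2} (hU : IsOpen U) (hμU : μ U ≠ 0) :
    ∃ x ∈ U, x ∈ msupport μ := by
  by_contra hcon
  push_neg at hcon
  have h1 : ∀ x : U, ∃ V : Set E2, IsOpen V ∧ (x:E2) ∈ V ∧ μ V = 0 := by
    intro ⟨x, hx⟩
    have := hcon x hx
    simp only [msupport, Set.mem_setOf_eq, not_forall] at this
    obtain ⟨V, hVo, hxV, hV⟩ := this
    exact ⟨V, hVo, hxV, by simpa using hV⟩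
  choose V hVo hxV hV0 using h1
  obtain ⟨T, hTc, hTU⟩ := TopologicalSpace.isOpen_iUnion_countable V hVo
  apply hμU
  have hsub : U ⊆ ⋃ i ∈ T, V i := by
    intro x hx
    rw [hTU]
    exact Set.mem_iUnion.2 ⟨⟨x, hx⟩, hxV _⟩
  exact measure_mono_null hsub ((measure_biUnion_null_iff hTc).2 (fun i _ => hV0 i))

lemma markov_dDiag {p : ℝ} (hp0 : 0 < p) {μ : Measure E2} (hμp : Pers p μ < ⊤)
    {t : ℝ} (ht : 0 < t) : μ.restrict Omega {x | t ≤ dDiag x} < ⊤ := by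
  set ν := μ.restrict Omega
  have hmeas : Measurable (fun x => ENNReal.ofReal (dDiag x ^ p)) :=
    measurable_ofReal_rpow hp0 continuous_dDiag
  have h := mul_meas_ge_le_lintegral (μ := ν) hmeas (ENNReal.ofReal (t ^ p))
  have hsub : {x : E2 | t ≤ dDiag x} ⊆
      {x | ENNReal.ofReal (t ^ p) ≤ ENNReal.ofReal (dDiag x ^ p)} := by
    intro x hx
    exact ENNReal.ofReal_le_ofReal (Real.rpow_le_rpow (le_of_lt ht) hx (le_of_lt hp0))
  have htp : ENNReal.ofReal (t ^ p) ≠ 0 := by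
    simp only [ne_eq, ENNReal.ofReal_eq_zero, not_le]
    positivity
  by_contra hcon
  push_neg at hcon
  have : (⊤:ℝ≥0∞) ≤ (μ.restrict Omega) {x | ENNReal.ofReal (t ^ p) ≤ ENNReal.ofReal (dDiag x ^ p)} :=
    le_trans (top_le_iff.2 (top_le_iff.1 hcon)) (measure_mono hsub)
  have h2 : ENNReal.ofReal (t ^ p) * ⊤ ≤ Pers p μ :=
    le_trans (mul_le_mul_right this _) h
  rw [ENNReal.mul_top htp] at h2
  exact absurd (top_le_iff.1 h2) (by simpa using hμp.ne)

lemma core {p : ℝ} {μ : Measure E2} {k : ℕ} (hp : 1 ≤ p) (hk : 1 ≤ k)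
    (hμΩ : μ Omegaᶜ = 0) (hμp : Pers p μ < ⊤)
    (hsupp : ∃ s : Finset E2, s.card = k ∧ ↑s ⊆ msupport μ)
    {c : Fin k → E2} (hcb : ∀ j, c j ∈ OmegaBar) (hopt : Ffun p μ k c = RF p μ k)
    (j : Fin k)
    (hj : ∫⁻ x in Omega, ENNReal.ofReal (gm k c j x ^ p) ∂μ = RF p μ k) : False := by
  classical
  have hp0 : (0:ℝ) < p := lt_of_lt_of_le one_pos hp
  have hgm_meas : Measurable (fun x => ENNReal.ofReal (gm k c j x ^ p)) :=
    measurable_ofReal_rpow hp0 (continuous_gm c j)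
  have hRF_lt : RF p μ k < ⊤ := RF_lt_top hp0 hμp k
  obtain ⟨s, hscard, hssupp⟩ := hsupp
  by_cases hR : RF p μ k = 0
  · -- degenerate case: μ is carried by the k-1 other centroids
    have hae : (fun x => ENNReal.ofReal (gm k c j x ^ p)) =ᵐ[μ.restrict Omega] 0 :=
      (lintegral_eq_zero_iff hgm_meas).1 (hj.trans hR)
    set C : Finset E2 := (Finset.univ.erase j).image c with hC
    have hN : (μ.restrict Omega) {x | ENNReal.ofReal (gm k c j x ^ p) ≠ 0} = 0 := hae
    have hcompl : μ (↑C)ᶜ = 0 := by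
      have hsub : (↑C)ᶜ ⊆ ({x | ENNReal.ofReal (gm k c j x ^ p) ≠ 0} ∩ Omega) ∪ Omegaᶜ := by
        intro x hx
        by_cases hxΩ : x ∈ Omega
        · refine Or.inl ⟨?_, hxΩ⟩
          simp only [Set.mem_setOf_eq, ne_eq, ENNReal.ofReal_eq_zero, not_le]
          have hgm0 : gm k c j x ≠ 0 := by
            intro h0
            obtain ⟨j', hj', hje⟩ := gm_exists_eq c j x
            rw [h0] at hje
            unfold cdistC at hje
            split at hje
            · next hlt =>
              have : x = c ⟨j', hlt⟩ := dist_eq_zero.1 hje.symm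
              apply hx
              refine Finset.mem_coe.2 (Finset.mem_image.2 ⟨⟨j', hlt⟩, ?_, this.symm⟩)
              refine Finset.mem_erase.2 ⟨?_, Finset.mem_univ _⟩
              intro he
              apply hj'
              rw [← he]
              exact Fin.ext rfl
            · exact absurd hje.symm (ne_of_gt (dDiag_pos hxΩ))
          exact Real.rpow_pos_of_pos
            (lt_of_le_of_ne (gm_nonneg c j x) (Ne.symm hgm0)) p
        · exact Or.inr hxΩ
      refine measure_mono_null hsub (measure_union_null ?_ hμΩ)
      have hmS : MeasurableSet {x : E2 | ENNReal.ofReal (gm k c j x ^ p) ≠ 0} :=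
        hgm_meas (measurableSet_singleton 0).compl
      have h2 := hN
      rw [Measure.restrict_apply hmS] at h2
      exact h2
    have hsuppC : msupport μ ⊆ ↑C := by
      intro x hx
      by_contra hxC
      have := hx (↑C)ᶜ (C.finite_toSet.isClosed.isOpen_compl) hxC
      rw [hcompl] at this
      exact lt_irrefl _ this
    have hcard : s.card ≤ C.card :=
      Finset.card_le_card (fun a ha => Finset.mem_coe.1 (hsuppC (hssupp ha)))
    have hCcard : C.card ≤ k - 1 := by
      refine le_trans (Finset.card_image_le) ?_
      rw [Finset.card_erase_of_mem (Finset.mem_univ _), Finset.card_univ, Fintype.card_fin]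
    omega
  · -- main case: strictly improve by relocating centroid j to a support point
    have hRpos : 0 < RF p μ k := pos_iff_ne_zero.2 hR
    -- find ε with positive measure where gm > ε
    have hε : ∃ ε : ℝ, 0 < ε ∧ (μ.restrict Omega) {x | ε < gm k c j x} ≠ 0 := by
      by_contra hcon
      push_neg at hcon
      have hU : (μ.restrict Omega) {x | 0 < gm k c j x} = 0 := by
        have hsub : {x | 0 < gm k c j x} ⊆ ⋃ n : ℕ, {x | 1/(n+1:ℝ) < gm k c j x} := by
          intro x hx
          obtain ⟨n, hn⟩ := exists_nat_one_div_lt (show (0:ℝ) < gm k c j x from hx)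
          exact Set.mem_iUnion.2 ⟨n, hn⟩
        refine measure_mono_null hsub (measure_iUnion_null (fun n => ?_))
        exact hcon _ (by positivity)
      have hz : ∫⁻ x in Omega, ENNReal.ofReal (gm k c j x ^ p) ∂μ = 0 := by
        refine lintegral_eq_zero_iff hgm_meas |>.2 (ae_iff.2 ?_)
        refine measure_mono_null ?_ hU
        intro x hx
        have hx' : ¬ (gm k c j x ^ p ≤ 0) := by
          simpa [ENNReal.ofReal_eq_zero] using hx
        have h1 : gm k c j x ≠ 0 := fun h0 => hx' (by rw [h0, Real.zero_rpow (ne_of_gt hp0)])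
        exact lt_of_le_of_ne (gm_nonneg c j x) (Ne.symm h1)
      rw [hz] at hj
      exact hR hj.symm
    obtain ⟨ε, hε0, hνε⟩ := hε
    -- a support point with gm > ε
    have hUopen : IsOpen ({x | ε < gm k c j x} ∩ Omega) :=
      (isOpen_lt continuous_const (continuous_gm c j)).inter isOpen_Omega
    have hμU : μ ({x | ε < gm k c j x} ∩ Omega) ≠ 0 := by
      have h2 : (μ.restrict Omega) {x | ε < gm k c j x} = μ ({x | ε < gm k c j x} ∩ Omega) :=
        Measure.restrict_apply (measurableSet_lt measurable_const (continuous_gm c j).measurable)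
      rwa [h2] at hνε
    obtain ⟨x₀, hx₀U, hx₀supp⟩ := exists_support_point hUopen hμU
    have hx₀Ω : x₀ ∈ Omega := hx₀U.2
    have hx₀gm : ε < gm k c j x₀ := hx₀U.1
    set r := ε/3 with hrdef
    have hr : 0 < r := by positivity
    set B := Metric.ball x₀ r with hB
    have hμB : 0 < μ B := hx₀supp B Metric.isOpen_ball (Metric.mem_ball_self hr)
    have hBmeas : MeasurableSet B := Metric.isOpen_ball.measurableSet
    have hνB_pos : 0 < (μ.restrict Omega) B := by
      rw [Measure.restrict_apply hBmeas]
      have h1 : μ B ≤ μ (B ∩ Omega) + μ Omegaᶜ := by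
        refine le_trans (measure_mono ?_) (measure_union_le _ _)
        intro x hx
        by_cases h : x ∈ Omega
        · exact Or.inl ⟨hx, h⟩
        · exact Or.inr h
      rw [hμΩ, add_zero] at h1
      exact lt_of_lt_of_le hμB h1
    -- gm is large on B, so is dDiag
    have hgmB : ∀ x ∈ B, 2*r ≤ gm k c j x := by
      intro x hx
      have h1 : gm k c j x₀ ≤ gm k c j x + dist x₀ x := gm_lip c j x₀ x
      have h2 : dist x₀ x < r := by rw [dist_comm]; exact hx
      have h3 : r = ε/3 := hrdef
      linarith
    have hBsub : B ⊆ {x | 2*r ≤ dDiag x} :=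
      fun x hx => le_trans (hgmB x hx) (gm_le_dDiag c j x)
    have hνB_lt : (μ.restrict Omega) B < ⊤ :=
      lt_of_le_of_lt (measure_mono hBsub) (markov_dDiag hp0 hμp (by positivity))
    -- the improved codebook
    set c' := Function.update c j x₀ with hc'
    have hc'b : ∀ j', c' j' ∈ OmegaBar := by
      intro j'
      by_cases h : j' = j
      · rw [h, hc', Function.update_self]; exact Or.inl hx₀Ω
      · rw [hc', Function.update_of_ne h]; exact hcb j'
    have hgm_upd : ∀ x, gm k c' j x = gm k c j x := by
      intro x
      unfold gm
      refine Finset.inf'_congr _ rfl (fun j' hj' => ?_)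
      have hj'ne := (Finset.mem_erase.1 hj').1
      unfold cdistC
      split
      · next hlt =>
        congr 1
        rw [hc', Function.update_of_ne]
        intro he
        apply hj'ne
        rw [← he]
        exact Fin.ext rfl
      · rfl
    have hgfun_c' : ∀ x, gfun k c' x = min (dist x x₀) (gm k c j x) := by
      intro x
      rw [gfun_eq_min c' j x, hgm_upd x, hc', Function.update_self]
    -- integral estimates
    set X := ∫⁻ x in Bᶜ, ENNReal.ofReal (gm k c j x ^ p) ∂(μ.restrict Omega) with hX
    have hXfin : X ≠ ⊤ := by
      have : X ≤ ∫⁻ x, ENNReal.ofReal (gm k c j x ^ p) ∂(μ.restrict Omega) :=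
        setLIntegral_le_lintegral _ _
      have h2 : ∫⁻ x, ENNReal.ofReal (gm k c j x ^ p) ∂(μ.restrict Omega) = RF p μ k := hj
      exact ne_top_of_le_ne_top hRF_lt.ne (this.trans h2.le)
    have hsplit_gm : ENNReal.ofReal ((2*r) ^ p) * (μ.restrict Omega) B + X ≤ RF p μ k := by
      rw [← hj, ← lintegral_add_compl (fun x => ENNReal.ofReal (gm k c j x ^ p)) hBmeas]
      refine add_le_add_left ?_ X
      calc ENNReal.ofReal ((2*r) ^ p) * (μ.restrict Omega) B
          = ∫⁻ _ in B, ENNReal.ofReal ((2*r) ^ p) ∂(μ.restrict Omega) := (setLIntegral_const _ _).symm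
        _ ≤ ∫⁻ x in B, ENNReal.ofReal (gm k c j x ^ p) ∂(μ.restrict Omega) := by
            refine setLIntegral_mono' hBmeas (fun x hx => ?_)
            exact ENNReal.ofReal_le_ofReal
              (Real.rpow_le_rpow (by positivity) (hgmB x hx) (le_of_lt hp0))
    have hFc'_le : Ffun p μ k c' ≤ ENNReal.ofReal (r ^ p) * (μ.restrict Omega) B + X := by
      have hsplit := lintegral_add_compl (μ := μ.restrict Omega)
        (fun x => ENNReal.ofReal (min (dist x x₀) (gm k c j x) ^ p)) hBmeas
      have heq : Ffun p μ k c' =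
          ∫⁻ x, ENNReal.ofReal (min (dist x x₀) (gm k c j x) ^ p) ∂(μ.restrict Omega) := by
        refine lintegral_congr (fun x => ?_)
        rw [show gfun k c' x = min (dist x x₀) (gm k c j x) from hgfun_c' x]
      rw [heq]
      refine le_trans (le_of_eq (by exact hsplit.symm)) (add_le_add ?_ ?_)
      · calc ∫⁻ x in B, ENNReal.ofReal (min (dist x x₀) (gm k c j x) ^ p) ∂(μ.restrict Omega)
            ≤ ∫⁻ _ in B, ENNReal.ofReal (r ^ p) ∂(μ.restrict Omega) := by
              refine setLIntegral_mono' hBmeas (fun x hx => ?_)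
              refine ENNReal.ofReal_le_ofReal (Real.rpow_le_rpow ?_ ?_ (le_of_lt hp0))
              · exact le_min dist_nonneg (gm_nonneg c j x)
              · exact le_trans (min_le_left _ _) (le_of_lt hx)
          _ = ENNReal.ofReal (r ^ p) * (μ.restrict Omega) B := setLIntegral_const _ _
      · refine setLIntegral_mono (measurable_ofReal_rpow hp0 (continuous_gm c j))
          (fun x _ => ?_)
        refine ENNReal.ofReal_le_ofReal (Real.rpow_le_rpow ?_ (min_le_right _ _) (le_of_lt hp0))
        exact le_min dist_nonneg (gm_nonneg c j x)
    have hchain : ENNReal.ofReal ((2*r) ^ p) * (μ.restrict Omega) B + X ≤ ENNReal.ofReal (r ^ p) * (μ.restrict Omega) B + X :=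
      hsplit_gm.trans ((RF_le hc'b).trans hFc'_le)
    rw [ENNReal.add_le_add_iff_right hXfin] at hchain
    rw [ENNReal.mul_le_mul_iff_left (ne_of_gt hνB_pos) hνB_lt.ne] at hchain
    rw [ENNReal.ofReal_le_ofReal_iff (by positivity)] at hchain
    have : r ^ p < (2*r) ^ p :=
      Real.rpow_lt_rpow (le_of_lt hr) (by linarith) hp0
    linarith


open Filter in
lemma no_redundant {p : ℝ} {μ : Measure E2} {k : ℕ} (hp : 1 ≤ p) (hk : 1 ≤ k)
    (hμΩ : μ Omegaᶜ = 0) (hμp : Pers p μ < ⊤)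
    (hsupp : ∃ s : Finset E2, s.card = k ∧ ↑s ⊆ msupport μ)
    {c : Fin k → E2} (hcb : ∀ j, c j ∈ OmegaBar) (hopt : Ffun p μ k c = RF p μ k) :
    (∀ j : Fin k, c j ∈ Omega) ∧ Function.Injective c := by
  have key : ∀ j : Fin k, (∀ x, gfun k c x = gm k c j x) → False := by
    intro j hred
    refine core hp hk hμΩ hμp hsupp hcb hopt j ?_
    rw [← hopt]
    unfold Ffun
    exact lintegral_congr (fun x => by rw [hred x])
  constructor
  · intro j
    refine mem_Omega_of_OmegaBar (hcb j) (fun hdiag => key j (fun x => ?_))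
    rw [gfun_eq_min c j x]
    exact min_eq_right ((gm_le_dDiag c j x).trans (dDiag_le_dist hdiag x))
  · intro j j' hjj'
    by_contra hne
    refine key j (fun x => ?_)
    rw [gfun_eq_min c j x]
    refine min_eq_right ?_
    have h1 : (j'.castSucc : Fin (k+1)) ≠ j.castSucc := by
      simpa [Fin.castSucc_inj] using (Ne.symm hne)
    calc gm k c j x ≤ cdistC k c j'.castSucc x := gm_le c j h1 x
      _ = dist x (c j') := cdistC_castSucc c j' x
      _ = dist x (c j) := by rw [hjj']

open Filter in
lemma cell_null_absurd {p : ℝ} {μ : Measure E2} {k : ℕ} (hp : 1 ≤ p) (hk : 1 ≤ k)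
    (hμΩ : μ Omegaᶜ = 0) (hμp : Pers p μ < ⊤)
    (hsupp : ∃ s : Finset E2, s.card = k ∧ ↑s ⊆ msupport μ)
    {c : Fin k → E2} (hcb : ∀ j, c j ∈ OmegaBar) (hopt : Ffun p μ k c = RF p μ k)
    (j : Fin k) (hnull : μ {x | x ∈ Omega ∧ dist x (c j) < gm k c j x} = 0) : False := by
  have hp0 : (0:ℝ) < p := lt_of_lt_of_le one_pos hp
  refine core hp hk hμΩ hμp hsupp hcb hopt j ?_
  rw [← hopt]
  unfold Ffun
  have hsub : {x : E2 | ¬ (ENNReal.ofReal (gm k c j x ^ p) = ENNReal.ofReal (gfun k c x ^ p))}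
      ⊆ {x | x ∈ Omega ∧ dist x (c j) < gm k c j x} ∪ Omegaᶜ := by
    intro x hx
    by_cases hxΩ : x ∈ Omega
    · refine Or.inl ⟨hxΩ, ?_⟩
      by_contra hge
      apply hx
      have hge' : gm k c j x ≤ dist x (c j) := not_lt.1 hge
      have heq : gfun k c x = gm k c j x := by
        rw [gfun_eq_min c j x]
        exact min_eq_right hge'
      rw [heq]
    · exact Or.inr hxΩ
  have hDnull : (μ.restrict Omega) {x : E2 |
      ¬ (ENNReal.ofReal (gm k c j x ^ p) = ENNReal.ofReal (gfun k c x ^ p))} = 0 := by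
    refine le_antisymm ?_ zero_le
    refine le_trans (Measure.restrict_apply_le _ _) ?_
    refine le_trans (measure_mono hsub) (le_of_eq (measure_union_null hnull hμΩ))
  exact lintegral_congr_ae (ae_iff.2 hDnull)

open Filter in
lemma exists_subseq_dichotomy {k : ℕ} (u : ℕ → Fin k → E2) :
    ∃ φ : ℕ → ℕ, StrictMono φ ∧ ∀ j : Fin k,
      (∃ a : E2, Tendsto (fun n => u (φ n) j) atTop (nhds a)) ∨
      Tendsto (fun n => ‖u (φ n) j‖) atTop atTop := by
  suffices h : ∀ s : Finset (Fin k), ∃ φ : ℕ → ℕ, StrictMono φ ∧ ∀ j ∈ s,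
      (∃ a : E2, Tendsto (fun n => u (φ n) j) atTop (nhds a)) ∨
      Tendsto (fun n => ‖u (φ n) j‖) atTop atTop by
    obtain ⟨φ, hφ, hall⟩ := h Finset.univ
    exact ⟨φ, hφ, fun j => hall j (Finset.mem_univ j)⟩
  intro s
  induction s using Finset.induction_on with
  | empty => exact ⟨id, strictMono_id, by simp⟩
  | @insert a s ha ih =>
    obtain ⟨φ, hφ, hall⟩ := ih
    by_cases hb : Tendsto (fun n => ‖u (φ n) a‖) atTop atTop
    · refine ⟨φ, hφ, fun j hj => ?_⟩
      rcases Finset.mem_insert.1 hj with h | h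
      · subst h; exact Or.inr hb
      · exact hall j h
    · have hfreq : ∃ M : ℝ, ∃ᶠ n in atTop, ‖u (φ n) a‖ < M := by
        by_contra hc
        push_neg at hc
        apply hb
        rw [tendsto_atTop]
        intro M
        have := hc M
        exact this
      obtain ⟨M, hM⟩ := hfreq
      obtain ⟨ψ, hψ, hψP⟩ := Filter.extraction_of_frequently_atTop hM
      obtain ⟨b, _, ψ₂, hψ₂, hconv⟩ := tendsto_subseq_of_bounded
        (Metric.isBounded_closedBall (x := (0:E2)) (r := M))
        (x := fun n => u (φ (ψ n)) a)
        (fun n => by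
          simp only [Metric.mem_closedBall, dist_zero_right]
          exact (hψP n).le)
      have hcompmono : StrictMono (fun n => φ (ψ (ψ₂ n))) := hφ.comp (hψ.comp hψ₂)
      refine ⟨fun n => φ (ψ (ψ₂ n)), hcompmono, fun j hj => ?_⟩
      rcases Finset.mem_insert.1 hj with h | h
      · subst h
        exact Or.inl ⟨b, hconv⟩
      · rcases hall j h with ⟨a', ha'⟩ | hdiv
        · exact Or.inl ⟨a', ha'.comp ((hψ.comp hψ₂).tendsto_atTop)⟩
        · exact Or.inr (hdiv.comp ((hψ.comp hψ₂).tendsto_atTop))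

/-- comparing minima of two codebooks that agree except on "far" entries -/
lemma gfun_le_congr {k : ℕ} {e e' : Fin k → E2} (x : E2)
    (h : ∀ j, e j = e' j ∨ dDiag x ≤ dist x (e' j)) :
    gfun k e x ≤ gfun k e' x := by
  refine le_gfun e' x (fun j' => ?_)
  unfold cdistC
  split
  · next hlt =>
    rcases h ⟨j', hlt⟩ with he | hfar
    · rw [← he]
      calc gfun k e x ≤ cdistC k e (⟨j', hlt⟩ : Fin k).castSucc x := gfun_le e _ x
        _ = dist x (e ⟨j', hlt⟩) := cdistC_castSucc e _ x
    · exact (gfun_le_dDiag e x).trans hfar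
  · exact gfun_le_dDiag e x

lemma gfun_congr {k : ℕ} {e e' : Fin k → E2} (x : E2)
    (h : ∀ j, e j = e' j ∨ (dDiag x ≤ dist x (e j) ∧ dDiag x ≤ dist x (e' j))) :
    gfun k e x = gfun k e' x := by
  refine le_antisymm (gfun_le_congr x (fun j => ?_)) (gfun_le_congr x (fun j => ?_))
  · rcases h j with h1 | h1
    · exact Or.inl h1
    · exact Or.inr h1.2
  · rcases h j with h1 | h1
    · exact Or.inl h1.symm
    · exact Or.inr h1.1


open Filter in
lemma lemT {p : ℝ} (hp0 : 0 < p) (μ : Measure E2) {k : ℕ} (u : ℕ → Fin k → E2)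
    (hu : ∀ n j, u n j ∈ OmegaBar) :
    ∃ φ : ℕ → ℕ, StrictMono φ ∧ ∃ c : Fin k → E2, (∀ j, c j ∈ OmegaBar) ∧
      Ffun p μ k c ≤ liminf (fun n => Ffun p μ k (u (φ n))) atTop ∧
      ∀ j, Tendsto (fun n => u (φ n) j) atTop (nhds (c j)) ∨ c j ∈ diagSet := by
  classical
  obtain ⟨φ, hφ, hd⟩ := exists_subseq_dichotomy u
  set c : Fin k → E2 := fun j =>
    if h : ∃ a, Tendsto (fun n => u (φ n) j) atTop (nhds a) then h.choose else 0 with hcdef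
  have hconv : ∀ j, (∃ a, Tendsto (fun n => u (φ n) j) atTop (nhds a)) →
      Tendsto (fun n => u (φ n) j) atTop (nhds (c j)) := by
    intro j h
    rw [hcdef]
    simp only [dif_pos h]
    exact h.choose_spec
  have hdiverge : ∀ j, ¬ (∃ a, Tendsto (fun n => u (φ n) j) atTop (nhds a)) →
      c j = 0 ∧ Tendsto (fun n => ‖u (φ n) j‖) atTop atTop := by
    intro j h
    refine ⟨by rw [hcdef]; simp only [dif_neg h], ?_⟩
    rcases hd j with hc | hdiv
    · exact absurd hc h
    · exact hdiv
  have hcb : ∀ j, c j ∈ OmegaBar := by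
    intro j
    by_cases h : ∃ a, Tendsto (fun n => u (φ n) j) atTop (nhds a)
    · exact isClosed_OmegaBar.mem_of_tendsto (hconv j h)
        (Filter.Eventually.of_forall (fun n => hu _ j))
    · rw [(hdiverge j h).1]
      exact zero_mem_OmegaBar
  -- pointwise convergence of the min functions
  have hpt : ∀ x : E2, Tendsto (fun n => gfun k (u (φ n)) x) atTop (nhds (gfun k c x)) := by
    intro x
    set d : ℕ → Fin k → E2 := fun n j =>
      if (∃ a, Tendsto (fun n => u (φ n) j) atTop (nhds a)) then u (φ n) j else c j with hddef
    have hdconv : ∀ j, Tendsto (fun n => d n j) atTop (nhds (c j)) := by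
      intro j
      by_cases h : ∃ a, Tendsto (fun n => u (φ n) j) atTop (nhds a)
      · have : (fun n => d n j) = fun n => u (φ n) j := by
          funext n; rw [hddef]; simp only [if_pos h]
        rw [this]
        exact hconv j h
      · have : (fun n => d n j) = fun _ => c j := by
          funext n; rw [hddef]; simp only [if_neg h]
        rw [this]
        exact tendsto_const_nhds
    have hgd : Tendsto (fun n => gfun k (d n) x) atTop (nhds (gfun k c x)) := by
      unfold gfun
      refine Filter.Tendsto.finset_inf'_nhds_apply _ (fun j' _ => ?_)
      unfold cdistC
      split
      · next hlt => exact Filter.Tendsto.dist tendsto_const_nhds (hdconv ⟨j', hlt⟩)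
      · exact tendsto_const_nhds
    have heq : ∀ᶠ n in atTop, gfun k (d n) x = gfun k (u (φ n)) x := by
      have hfar : ∀ᶠ n in atTop, ∀ j : Fin k,
          ¬ (∃ a, Tendsto (fun n => u (φ n) j) atTop (nhds a)) →
          dDiag x ≤ dist x (u (φ n) j) := by
        rw [eventually_all]
        intro j
        by_cases h : ∃ a, Tendsto (fun n => u (φ n) j) atTop (nhds a)
        · exact Filter.Eventually.of_forall (fun n hn => absurd h hn)
        · have hdiv := (hdiverge j h).2
          have : ∀ᶠ n in atTop, ‖x‖ + dDiag x ≤ ‖u (φ n) j‖ :=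
            hdiv.eventually_ge_atTop _
          refine this.mono (fun n hn _ => ?_)
          have h1 : ‖u (φ n) j‖ - ‖x‖ ≤ dist x (u (φ n) j) := by
            rw [dist_comm, dist_eq_norm]
            linarith [norm_sub_norm_le (u (φ n) j) x]
          linarith
      refine hfar.mono (fun n hn => ?_)
      refine gfun_congr x (fun j => ?_)
      by_cases h : ∃ a, Tendsto (fun n => u (φ n) j) atTop (nhds a)
      · refine Or.inl ?_
        rw [hddef]; simp only [if_pos h]
      · refine Or.inr ⟨?_, hn j h⟩
        rw [hddef]
        simp only [if_neg h, (hdiverge j h).1]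
        exact dDiag_le_dist zero_mem_diag x
    exact hgd.congr' heq
  -- Fatou
  refine ⟨φ, hφ, c, hcb, ?_, fun j => ?_⟩
  · have hmeas : ∀ n, Measurable (fun x => ENNReal.ofReal (gfun k (u (φ n)) x ^ p)) :=
      fun n => measurable_ofReal_rpow hp0 (continuous_gfun _)
    have hptE : ∀ x : E2, Tendsto (fun n => ENNReal.ofReal (gfun k (u (φ n)) x ^ p)) atTop
        (nhds (ENNReal.ofReal (gfun k c x ^ p))) := by
      intro x
      exact (ENNReal.continuous_ofReal.tendsto _).comp
        (((continuous_rpow_const hp0).tendsto _).comp (hpt x))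
    calc Ffun p μ k c
        = ∫⁻ x in Omega, liminf (fun n => ENNReal.ofReal (gfun k (u (φ n)) x ^ p)) atTop ∂μ := by
          unfold Ffun
          exact lintegral_congr (fun x => ((hptE x).liminf_eq).symm)
      _ ≤ liminf (fun n => Ffun p μ k (u (φ n))) atTop := lintegral_liminf_le hmeas
  · by_cases h : ∃ a, Tendsto (fun n => u (φ n) j) atTop (nhds a)
    · exact Or.inl (hconv j h)
    · rw [(hdiverge j h).1]
      exact Or.inr zero_mem_diag


open Filter in
lemma exists_opt {p : ℝ} (hp : 1 ≤ p) {μ : Measure E2} (hμp : Pers p μ < ⊤) (k : ℕ) :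
    ∃ c : Fin k → E2, (∀ j, c j ∈ OmegaBar) ∧ Ffun p μ k c = RF p μ k := by
  have hp0 : (0:ℝ) < p := lt_of_lt_of_le one_pos hp
  have hRF := RF_lt_top hp0 hμp k
  have hchoice : ∀ n : ℕ, ∃ c : Fin k → E2, (∀ j, c j ∈ OmegaBar) ∧
      Ffun p μ k c < RF p μ k + ((n:ℝ≥0∞)+1)⁻¹ := by
    intro n
    have hlt : RF p μ k < RF p μ k + ((n:ℝ≥0∞)+1)⁻¹ := by
      refine ENNReal.lt_add_right hRF.ne ?_
      simp [ENNReal.inv_eq_zero]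
    conv at hlt => lhs; rw [RF]
    obtain ⟨c, hc⟩ := iInf_lt_iff.1 hlt
    obtain ⟨hP, hlt2⟩ := iInf_lt_iff.1 hc
    exact ⟨c, hP, hlt2⟩
  choose u hub hulow using hchoice
  obtain ⟨φ, hφ, c, hcb, hlim, _⟩ := lemT hp0 μ u hub
  refine ⟨c, hcb, le_antisymm ?_ (RF_le hcb)⟩
  refine le_trans hlim ?_
  have h1 : ∀ n, Ffun p μ k (u (φ n)) ≤ RF p μ k + ((n:ℝ≥0∞)+1)⁻¹ := by
    intro n
    refine le_trans (hulow (φ n)).le (add_le_add_right ?_ _)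
    refine ENNReal.inv_le_inv.2 (add_le_add_left (Nat.cast_le.2 hφ.le_apply) 1)
  have h3 : Tendsto (fun n : ℕ => ((n:ℝ≥0∞)+1)⁻¹) atTop (nhds 0) := by
    refine tendsto_of_tendsto_of_tendsto_of_le_of_le tendsto_const_nhds
      ENNReal.tendsto_inv_nat_nhds_zero (fun n => zero_le)
      (fun n => ENNReal.inv_le_inv.2 (le_add_right le_rfl))
  have h2 : Tendsto (fun n : ℕ => RF p μ k + ((n:ℝ≥0∞)+1)⁻¹) atTop (nhds (RF p μ k)) := by
    have := Filter.Tendsto.const_add (RF p μ k) h3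
    simpa using this
  calc liminf (fun n => Ffun p μ k (u (φ n))) atTop
      ≤ liminf (fun n : ℕ => RF p μ k + ((n:ℝ≥0∞)+1)⁻¹) atTop :=
        liminf_le_liminf (Eventually.of_forall h1)
    _ = RF p μ k := h2.liminf_eq

open Filter in
lemma copt_seq_compact {p : ℝ} {μ : Measure E2} {k : ℕ} (hp : 1 ≤ p) (hk : 1 ≤ k)
    (hμΩ : μ Omegaᶜ = 0) (hμp : Pers p μ < ⊤)
    (hsupp : ∃ s : Finset E2, s.card = k ∧ ↑s ⊆ msupport μ)
    (u : ℕ → Fin k → E2)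
    (hu : ∀ n, (∀ j, u n j ∈ OmegaBar) ∧ Ffun p μ k (u n) = RF p μ k) :
    ∃ φ : ℕ → ℕ, StrictMono φ ∧ ∃ c : Fin k → E2,
      ((∀ j, c j ∈ OmegaBar) ∧ Ffun p μ k c = RF p μ k) ∧
      (∀ j, c j ∈ Omega) ∧ Function.Injective c ∧
      ∀ j, Tendsto (fun n => u (φ n) j) atTop (nhds (c j)) := by
  have hp0 : (0:ℝ) < p := lt_of_lt_of_le one_pos hp
  obtain ⟨φ, hφ, c, hcb, hlim, hdic⟩ := lemT hp0 μ u (fun n => (hu n).1)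
  have hconst : (fun n => Ffun p μ k (u (φ n))) = fun _ => RF p μ k :=
    funext (fun n => (hu (φ n)).2)
  have hFc : Ffun p μ k c = RF p μ k := by
    refine le_antisymm ?_ (RF_le hcb)
    rw [hconst] at hlim
    simpa [liminf_const] using hlim
  obtain ⟨hΩ, hinj⟩ := no_redundant hp hk hμΩ hμp hsupp hcb hFc
  refine ⟨φ, hφ, c, ⟨hcb, hFc⟩, hΩ, hinj, fun j => ?_⟩
  rcases hdic j with h | h
  · exact h
  · exact absurd h (not_mem_diag_of_mem_Omega (hΩ j))


lemma cdistPt_nonneg {k : ℕ} (c : Fin k → E2) (j j' : Fin (k+1)) :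
    0 ≤ cdistPt k c j j' := by
  unfold cdistPt
  split
  · split
    · exact dist_nonneg
    · exact dDiag_nonneg _
  · split
    · exact dDiag_nonneg _
    · exact le_rfl

open Filter in
lemma tendsto_cdistPt {k : ℕ} {u : ℕ → Fin k → E2} {c : Fin k → E2}
    (htend : ∀ j, Tendsto (fun n => u n j) atTop (nhds (c j))) (j j' : Fin (k+1)) :
    Tendsto (fun n => cdistPt k (u n) j j') atTop (nhds (cdistPt k c j j')) := by
  unfold cdistPt
  split
  · next h =>
    split
    · next h' => exact Filter.Tendsto.dist (htend ⟨j, h⟩) (htend ⟨j', h'⟩)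
    · exact (continuous_dDiag.tendsto _).comp (htend ⟨j, h⟩)
  · split
    · next h' => exact (continuous_dDiag.tendsto _).comp (htend ⟨j', h'⟩)
    · exact tendsto_const_nhds

open Filter in
lemma pair_sep {p : ℝ} {μ : Measure E2} {k : ℕ} (hp : 1 ≤ p) (hk : 1 ≤ k)
    (hμΩ : μ Omegaᶜ = 0) (hμp : Pers p μ < ⊤)
    (hsupp : ∃ s : Finset E2, s.card = k ∧ ↑s ⊆ msupport μ) (j j' : Fin (k+1)) :
    ∃ δ : ℝ, 0 < δ ∧ ∀ c ∈ Copt p μ k, j ≠ j' → δ ≤ cdistPt k c j j' := by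
  by_contra hcon
  push_neg at hcon
  have hchoice : ∀ n : ℕ, ∃ c : Fin k → E2, c ∈ Copt p μ k ∧ j ≠ j' ∧
      cdistPt k c j j' < 1/(n+1:ℝ) := by
    intro n
    obtain ⟨c, hc, hne, hlt⟩ := hcon (1/(n+1:ℝ)) (by positivity)
    exact ⟨c, hc, hne, hlt⟩
  choose u huC hne hlt using hchoice
  have huF : ∀ n, (∀ jj, u n jj ∈ OmegaBar) ∧ Ffun p μ k (u n) = RF p μ k :=
    fun n => (Copt_iff p hp μ k (u n)).1 (huC n)
  obtain ⟨φ, hφ, c, hcopt, hΩ, hinj, htend⟩ :=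
    copt_seq_compact hp hk hμΩ hμp hsupp u huF
  have hlim : Tendsto (fun n => cdistPt k (u (φ n)) j j') atTop
      (nhds (cdistPt k c j j')) := tendsto_cdistPt (fun jj => htend jj) j j'
  have hzero : Tendsto (fun n => cdistPt k (u (φ n)) j j') atTop (nhds 0) := by
    refine tendsto_of_tendsto_of_tendsto_of_le_of_le tendsto_const_nhds
      tendsto_one_div_add_atTop_nhds_zero_nat
      (fun n => cdistPt_nonneg _ j j') (fun n => ?_)
    refine le_trans (hlt (φ n)).le ?_
    refine one_div_le_one_div_of_le (by positivity) ?_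
    have hmn : (n:ℝ) ≤ (φ n : ℝ) := Nat.cast_le.2 hφ.le_apply
    linarith
  have h0 : cdistPt k c j j' = 0 := tendsto_nhds_unique hlim hzero
  have hnejj := hne 0
  unfold cdistPt at h0
  by_cases h : (j:ℕ) < k
  · rw [dif_pos h] at h0
    by_cases h' : (j':ℕ) < k
    · rw [dif_pos h'] at h0
      have heq := hinj (dist_eq_zero.1 h0)
      apply hnejj
      have hval : (j:ℕ) = (j':ℕ) := congrArg (@Fin.val k) heq
      exact Fin.ext hval
    · rw [dif_neg h'] at h0
      exact (not_mem_diag_of_mem_Omega (hΩ ⟨j, h⟩)) (mem_diag_of_dDiag_eq_zero h0)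
  · rw [dif_neg h] at h0
    by_cases h' : (j':ℕ) < k
    · rw [dif_pos h'] at h0
      exact (not_mem_diag_of_mem_Omega (hΩ ⟨j', h'⟩)) (mem_diag_of_dDiag_eq_zero h0)
    · apply hnejj
      have hj : (j:ℕ) = k := le_antisymm (Nat.lt_succ_iff.1 j.isLt) (not_lt.1 h)
      have hj' : (j':ℕ) = k := le_antisymm (Nat.lt_succ_iff.1 j'.isLt) (not_lt.1 h')
      exact Fin.ext (hj.trans hj'.symm)

open Filter in
lemma cell_mass {p : ℝ} {μ : Measure E2} {k : ℕ} (hp : 1 ≤ p) (hk : 1 ≤ k)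
    (hμΩ : μ Omegaᶜ = 0) (hμp : Pers p μ < ⊤)
    (hsupp : ∃ s : Finset E2, s.card = k ∧ ↑s ⊆ msupport μ) (j : Fin k) :
    ∃ ε : ℝ≥0∞, 0 < ε ∧ ∀ c ∈ Copt p μ k, ε ≤ μ (Vcell k c j.castSucc) := by
  by_contra hcon
  push_neg at hcon
  have hchoice : ∀ n : ℕ, ∃ c : Fin k → E2, c ∈ Copt p μ k ∧
      μ (Vcell k c j.castSucc) < ((n:ℝ≥0∞)+1)⁻¹ := by
    intro n
    obtain ⟨c, hc, hlt⟩ := hcon ((n:ℝ≥0∞)+1)⁻¹ (by simp)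
    exact ⟨c, hc, hlt⟩
  choose u huC hlt using hchoice
  have huF : ∀ n, (∀ jj, u n jj ∈ OmegaBar) ∧ Ffun p μ k (u n) = RF p μ k :=
    fun n => (Copt_iff p hp μ k (u n)).1 (huC n)
  obtain ⟨φ, hφ, c, hcopt, hΩ, hinj, htend⟩ :=
    copt_seq_compact hp hk hμΩ hμp hsupp u huF
  set Vo := {x | x ∈ Omega ∧ dist x (c j) < gm k c j x} with hVo
  have hVoOpen : IsOpen Vo := by
    have : Vo = {x | dist x (c j) < gm k c j x} ∩ Omega := by
      ext x; simp only [hVo, Set.mem_setOf_eq, Set.mem_inter_iff]; tauto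
    rw [this]
    exact (isOpen_lt (Continuous.dist continuous_id continuous_const)
      (continuous_gm c j)).inter isOpen_Omega
  -- eventually each point of Vo lies in the moving cell
  have hptw : ∀ x ∈ Vo, ∀ᶠ n in atTop, x ∈ Vcell k (u (φ n)) j.castSucc := by
    intro x hx
    have hstrict : ∀ j' : Fin (k+1), j' ≠ j.castSucc →
        dist x (c j) < cdistC k c j' x := by
      intro j' hj'
      exact lt_of_lt_of_le hx.2 (gm_le c j hj' x)
    have hev : ∀ᶠ n in atTop, ∀ j' : Fin (k+1), j' ≠ j.castSucc →
        dist x (u (φ n) j) < cdistC k (u (φ n)) j' x := by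
      rw [eventually_all]
      intro j'
      by_cases hj' : j' = j.castSucc
      · exact Filter.Eventually.of_forall (fun n h => absurd hj' h)
      · have h1 : Tendsto (fun n => dist x (u (φ n) j)) atTop (nhds (dist x (c j))) :=
          Filter.Tendsto.dist tendsto_const_nhds (htend j)
        have h2 : Tendsto (fun n => cdistC k (u (φ n)) j' x) atTop
            (nhds (cdistC k c j' x)) := by
          unfold cdistC
          split
          · next hlt' => exact Filter.Tendsto.dist tendsto_const_nhds (htend ⟨j', hlt'⟩)
          · exact tendsto_const_nhds
        exact (h1.eventually_lt h2 (hstrict j' hj')).mono (fun n hn _ => hn)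
    refine hev.mono (fun n hn => ?_)
    refine ⟨hx.1, fun j'' hj'' => ?_, fun j'' hj'' => ?_⟩
    · rw [cdistC_castSucc]
      exact le_of_lt (hn j'' (ne_of_lt hj''))
    · rw [cdistC_castSucc]
      exact hn j'' (ne_of_gt hj'')
  -- Fatou for indicators
  have hVo0 : μ Vo = 0 := by
    set f : ℕ → E2 → ℝ≥0∞ :=
      fun n => (Vcell k (u (φ n)) j.castSucc).indicator (fun _ => 1) with hf
    have hfm : ∀ n, Measurable (f n) :=
      fun n => measurable_const.indicator (measurableSet_Vcell _ _)
    have h1 : μ Vo = ∫⁻ x, Vo.indicator (fun _ => (1:ℝ≥0∞)) x ∂μ := by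
      rw [lintegral_indicator_const hVoOpen.measurableSet, one_mul]
    have h2 : ∀ x, Vo.indicator (fun _ => (1:ℝ≥0∞)) x ≤ liminf (fun n => f n x) atTop := by
      intro x
      by_cases hx : x ∈ Vo
      · rw [Set.indicator_of_mem hx]
        refine le_liminf_of_le (by isBoundedDefault) ?_
        refine ((hptw x hx).mono (fun n hn => ?_))
        rw [hf]
        simp only [Set.indicator_of_mem hn]
        exact le_rfl
      · rw [Set.indicator_of_notMem hx]
        exact zero_le
    have h3 : μ Vo ≤ liminf (fun n => ∫⁻ x, f n x ∂μ) atTop := by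
      rw [h1]
      refine le_trans (lintegral_mono (fun x => h2 x)) (lintegral_liminf_le hfm)
    have h4 : (fun n => ∫⁻ x, f n x ∂μ) = fun n => μ (Vcell k (u (φ n)) j.castSucc) := by
      funext n
      rw [hf]
      rw [lintegral_indicator_const (measurableSet_Vcell _ _), one_mul]
    rw [h4] at h3
    have h5 : liminf (fun n => μ (Vcell k (u (φ n)) j.castSucc)) atTop = 0 := by
      have hb : ∀ n, μ (Vcell k (u (φ n)) j.castSucc) ≤ ((n:ℝ≥0∞)+1)⁻¹ := by
        intro n
        refine le_trans (hlt (φ n)).le ?_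
        exact ENNReal.inv_le_inv.2 (add_le_add_left (Nat.cast_le.2 hφ.le_apply) 1)
      have h6 : Tendsto (fun n : ℕ => ((n:ℝ≥0∞)+1)⁻¹) atTop (nhds 0) :=
        tendsto_of_tendsto_of_tendsto_of_le_of_le tendsto_const_nhds
          ENNReal.tendsto_inv_nat_nhds_zero (fun n => zero_le)
          (fun n => ENNReal.inv_le_inv.2 (le_add_right le_rfl))
      refine le_antisymm ?_ zero_le
      calc liminf (fun n => μ (Vcell k (u (φ n)) j.castSucc)) atTop
          ≤ liminf (fun n : ℕ => ((n:ℝ≥0∞)+1)⁻¹) atTop :=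
            liminf_le_liminf (Eventually.of_forall hb)
        _ = 0 := h6.liminf_eq
    exact le_antisymm (h5 ▸ h3) zero_le
  exact cell_null_absurd hp hk hμΩ hμp hsupp hcopt.1 hcopt.2 j hVo0

end S7

/-- Corollary: positivity of `D_min` and `m_min`.
If `μ ∈ M^p` has at least `k` support points, then the infimum `D_min` over optimal
codebooks of the pairwise distances between centroids (including the diagonal) and the
infimum `m_min` over optimal codebooks of the cell masses `μ(V_j(c^*))` are both positive. -/
theorem statement7 (p : ℝ) (hp : 1 ≤ p) (k : ℕ) (hk : 1 ≤ k) (μ : Measure E2)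
    (hμΩ : μ Omegaᶜ = 0) (hμp : Pers p μ < ⊤)
    (hsupp : ∃ s : Finset E2, s.card = k ∧ ↑s ⊆ msupport μ) :
    0 < sInf {d : ℝ | ∃ c ∈ Copt p μ k, ∃ j j' : Fin (k+1), j ≠ j' ∧ d = cdistPt k c j j'} ∧
    0 < sInf {m : ℝ≥0∞ | ∃ c ∈ Copt p μ k, ∃ j : Fin k, m = μ (Vcell k c j.castSucc)} := by
  classical
  obtain ⟨c₀, hc₀b, hc₀F⟩ := S7.exists_opt hp hμp k
  have hc₀ : c₀ ∈ Copt p μ k := (S7.Copt_iff p hp μ k c₀).2 ⟨hc₀b, hc₀F⟩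
  constructor
  · have hne : {d : ℝ | ∃ c ∈ Copt p μ k, ∃ j j' : Fin (k+1), j ≠ j' ∧
        d = cdistPt k c j j'}.Nonempty := by
      refine ⟨cdistPt k c₀ 0 (Fin.last k), c₀, hc₀, 0, Fin.last k, ?_, rfl⟩
      intro h
      have h2 : ((0 : Fin (k+1)) : ℕ) = k := by
        have := congrArg Fin.val h
        simpa [Fin.last] using this
      simp at h2
      omega
    have hpair := fun pr : Fin (k+1) × Fin (k+1) =>
      S7.pair_sep hp hk hμΩ hμp hsupp pr.1 pr.2
    choose δf hδpos hδ using hpair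
    have hune : (Finset.univ : Finset (Fin (k+1) × Fin (k+1))).Nonempty :=
      ⟨(0,0), Finset.mem_univ _⟩
    have hδmin : 0 < Finset.univ.inf' hune δf :=
      (Finset.lt_inf'_iff hune).2 (fun pr _ => hδpos pr)
    refine lt_of_lt_of_le hδmin (le_csInf hne ?_)
    rintro d ⟨c, hc, j, j', hnejj, rfl⟩
    exact le_trans (Finset.inf'_le δf (Finset.mem_univ (j, j'))) (hδ (j, j') c hc hnejj)
  · have hpair := fun j : Fin k => S7.cell_mass hp hk hμΩ hμp hsupp j
    choose εf hεpos hε using hpair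
    have hkne : (Finset.univ : Finset (Fin k)).Nonempty := ⟨⟨0, hk⟩, Finset.mem_univ _⟩
    have hεmin : 0 < Finset.univ.inf' hkne εf :=
      (Finset.lt_inf'_iff hkne).2 (fun j _ => hεpos j)
    refine lt_of_lt_of_le hεmin (le_sInf ?_)
    rintro m ⟨c, hc, j, rfl⟩
    exact le_trans (Finset.inf'_le εf (Finset.mem_univ j)) (hε j c hc)

end
end

section
/- Let 1 ≤ p < ∞, k ≥ 1, and μ ∈ M^p. Then the distortion function R_{k,p} : Ω̄^k → ℝ, c ↦ (Σ_{j=1}^{k+1} ∫_{V_j(c)} ‖x − c_j‖^p dμ(x))^{1/p}, is continuous on Ω̄^k. -/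
open MeasureTheory ENNReal Set

noncomputable section

-- AUX START
namespace Stmt8

def minD (k : ℕ) (c : Fin k → E2) (x : E2) : ℝ :=
  Finset.univ.inf' Finset.univ_nonempty (fun j : Fin (k+1) => cdistC k c j x)

lemma cdistC_nonneg (k : ℕ) (c : Fin k → E2) (j : Fin (k+1)) (x : E2) :
    0 ≤ cdistC k c j x := by
  unfold cdistC; split
  · exact dist_nonneg
  · exact Metric.infDist_nonneg

lemma minD_nonneg (k : ℕ) (c : Fin k → E2) (x : E2) : 0 ≤ minD k c x :=
  Finset.le_inf' _ _ fun j _ => cdistC_nonneg k c j x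

lemma minD_le (k : ℕ) (c : Fin k → E2) (x : E2) (j : Fin (k+1)) :
    minD k c x ≤ cdistC k c j x :=
  Finset.inf'_le _ (Finset.mem_univ j)

lemma minD_le_dDiag (k : ℕ) (c : Fin k → E2) (x : E2) : minD k c x ≤ dDiag x := by
  have := minD_le k c x (Fin.last k)
  rwa [cdistC, dif_neg (by simp)] at this

lemma continuous_cdistC_x (k : ℕ) (c : Fin k → E2) (j : Fin (k+1)) :
    Continuous (fun x => cdistC k c j x) := by
  unfold cdistC; split
  · exact continuous_id.dist continuous_const
  · exact Metric.continuous_infDist_pt _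

lemma continuous_cdistC_c (k : ℕ) (j : Fin (k+1)) (x : E2) :
    Continuous (fun c : Fin k → E2 => cdistC k c j x) := by
  unfold cdistC; split
  · exact continuous_const.dist (continuous_apply _)
  · exact continuous_const

lemma continuous_minD_c (k : ℕ) (x : E2) :
    Continuous (fun c : Fin k → E2 => minD k c x) := by
  rw [continuous_iff_continuousAt]
  intro c
  exact ContinuousAt.finset_inf'_apply Finset.univ_nonempty
    (fun j _ => (continuous_cdistC_c k j x).continuousAt)

lemma continuous_minD_x (k : ℕ) (c : Fin k → E2) :
    Continuous (fun x => minD k c x) := by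
  rw [continuous_iff_continuousAt]
  intro x
  exact ContinuousAt.finset_inf'_apply Finset.univ_nonempty
    (fun j _ => (continuous_cdistC_x k c j).continuousAt)

lemma isOpen_Omega : IsOpen Omega := by
  have h0 : Continuous fun x : E2 => x 0 := PiLp.continuous_apply 2 _ 0
  have h1 : Continuous fun x : E2 => x 1 := PiLp.continuous_apply 2 _ 1
  exact isOpen_lt h0 h1

lemma measurableSet_Vcell (k : ℕ) (c : Fin k → E2) (j : Fin (k+1)) :
    MeasurableSet (Vcell k c j) := by
  have h1 : Vcell k c j = Omega ∩
      ((⋂ j' ∈ {j' : Fin (k+1) | j' < j}, {x | cdistC k c j x ≤ cdistC k c j' x}) ∩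
       (⋂ j' ∈ {j' : Fin (k+1) | j < j'}, {x | cdistC k c j x < cdistC k c j' x})) := by
    ext x; simp [Vcell, Set.mem_iInter, and_assoc]; tauto
  rw [h1]
  refine isOpen_Omega.measurableSet.inter (MeasurableSet.inter ?_ ?_)
  · exact MeasurableSet.biInter (Set.to_countable _) fun j' _ =>
      measurableSet_le (continuous_cdistC_x k c j).measurable
        (continuous_cdistC_x k c j').measurable
  · exact MeasurableSet.biInter (Set.to_countable _) fun j' _ =>
      measurableSet_lt (continuous_cdistC_x k c j).measurable
        (continuous_cdistC_x k c j').measurable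

lemma Vcell_disjoint (k : ℕ) (c : Fin k → E2) :
    Pairwise (Function.onFun Disjoint fun j => Vcell k c j) := by
  have key : ∀ i j : Fin (k+1), i < j → Disjoint (Vcell k c i) (Vcell k c j) := by
    intro i j hij
    rw [Set.disjoint_left]
    rintro x ⟨-, -, hi2⟩ ⟨-, hj1, -⟩
    exact absurd (hj1 i hij) (not_le.mpr (hi2 j hij))
  intro i j hij
  rcases lt_or_gt_of_ne hij with h | h
  · exact key i j h
  · exact (key j i h).symm

lemma eq_minD_of_mem_Vcell {k : ℕ} {c : Fin k → E2} {j : Fin (k+1)} {x : E2}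
    (hx : x ∈ Vcell k c j) : cdistC k c j x = minD k c x := by
  obtain ⟨-, h1, h2⟩ := hx
  refine le_antisymm (Finset.le_inf' _ _ fun j' _ => ?_) (minD_le k c x j)
  rcases lt_trichotomy j' j with h | h | h
  · exact h1 j' h
  · exact h ▸ le_refl _
  · exact (h2 j' h).le

lemma iUnion_Vcell (k : ℕ) (c : Fin k → E2) : ⋃ j, Vcell k c j = Omega := by
  apply Set.Subset.antisymm
  · exact Set.iUnion_subset fun j x hx => hx.1
  · intro x hx
    set T : Finset (Fin (k+1)) :=
      Finset.univ.filter (fun j => cdistC k c j x = minD k c x) with hT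
    have hTne : T.Nonempty := by
      obtain ⟨i, -, hi⟩ := Finset.exists_mem_eq_inf' (Finset.univ_nonempty)
        (fun j : Fin (k+1) => cdistC k c j x)
      exact ⟨i, by rw [hT, Finset.mem_filter]; exact ⟨Finset.mem_univ _, hi.symm⟩⟩
    set j := T.max' hTne with hj
    have hjT : j ∈ T := T.max'_mem hTne
    have hjeq : cdistC k c j x = minD k c x := by
      simpa [hT] using hjT
    refine Set.mem_iUnion.mpr ⟨j, hx, fun j' _ => ?_, fun j' hj' => ?_⟩
    · rw [hjeq]; exact minD_le k c x j'
    · rw [hjeq]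
      rcases lt_or_eq_of_le (minD_le k c x j') with h | h
      · exact h
      · exfalso
        have : j' ∈ T := by simp [hT, ← h]
        exact absurd (T.le_max' j' this) (not_le.mpr hj')

lemma distortion_eq (p : ℝ) (μ : Measure E2) (k : ℕ) (c : Fin k → E2) :
    distortion p μ k c
      = (∫⁻ x in Omega, ENNReal.ofReal (minD k c x ^ p) ∂μ) ^ (1/p) := by
  unfold distortion
  congr 1
  have step1 : ∀ j : Fin (k+1),
      ∫⁻ x in Vcell k c j, ENNReal.ofReal (cdistC k c j x ^ p) ∂μ
        = ∫⁻ x in Vcell k c j, ENNReal.ofReal (minD k c x ^ p) ∂μ := by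
    intro j
    refine setLIntegral_congr_fun (measurableSet_Vcell k c j)
      (fun x hx => ?_)
    rw [eq_minD_of_mem_Vcell hx]
  simp_rw [step1]
  rw [← iUnion_Vcell k c,
    lintegral_iUnion (measurableSet_Vcell k c) (Vcell_disjoint k c), tsum_fintype]

end Stmt8

/-- Lemma: continuity of the distortion `R_{k,p}` on `Ω̄^k`. -/
theorem statement8 (p : ℝ) (hp : 1 ≤ p) (k : ℕ) (hk : 1 ≤ k) (μ : Measure E2)
    (hμΩ : μ Omegaᶜ = 0) (hμp : Pers p μ < ⊤) :
    ContinuousOn (distortion p μ k) {c : Fin k → E2 | ∀ j, c j ∈ OmegaBar} := by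
  have hp0 : (0:ℝ) ≤ p := le_trans zero_le_one hp
  have hcont : Continuous (fun c : Fin k → E2 =>
      ∫⁻ x in Omega, ENNReal.ofReal (Stmt8.minD k c x ^ p) ∂μ) := by
    rw [continuous_iff_seqContinuous]
    intro cs c hcs
    have := tendsto_lintegral_of_dominated_convergence
      (μ := μ.restrict Omega)
      (F := fun n x => ENNReal.ofReal (Stmt8.minD k (cs n) x ^ p))
      (f := fun x => ENNReal.ofReal (Stmt8.minD k c x ^ p))
      (fun x => ENNReal.ofReal (dDiag x ^ p))
      (fun n => (ENNReal.measurable_ofReal.comp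
        ((Real.continuous_rpow_const hp0).comp
          (Stmt8.continuous_minD_x k (cs n))).measurable))
      (fun n => Filter.Eventually.of_forall fun x =>
        ENNReal.ofReal_le_ofReal
          (Real.rpow_le_rpow (Stmt8.minD_nonneg k (cs n) x)
            (Stmt8.minD_le_dDiag k (cs n) x) hp0))
      hμp.ne
      (Filter.Eventually.of_forall fun x => by
        have hc : Continuous fun c : Fin k → E2 =>
            ENNReal.ofReal (Stmt8.minD k c x ^ p) :=
          ENNReal.continuous_ofReal.comp
            ((Real.continuous_rpow_const hp0).comp (Stmt8.continuous_minD_c k x))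
        exact ((hc.tendsto c).comp hcs))
    exact this
  have heq : distortion p μ k = fun c =>
      (∫⁻ x in Omega, ENNReal.ofReal (Stmt8.minD k c x ^ p) ∂μ) ^ (1/p) :=
    funext (Stmt8.distortion_eq p μ k)
  rw [heq]
  exact (ENNReal.continuous_rpow_const.comp hcont).continuousOn

end
end

section
/- Let 1 ≤ p < ∞, k ≥ 1, and μ ∈ M^p. Let R_{k−1}^* denote the infimum of the (k−1)-point distortion R_{k−1,p} over Ω̄^{k−1} (with the convention R_0^* := Pers_p(μ)^{1/p}, the distortion of the empty codebook). Then for every 0 ≤ λ < R_{k−1}^*, the sublevel set {c ∈ Ω̄^k : R_{k,p}(c) ≤ λ} is compact. -/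
open MeasureTheory ENNReal Set

noncomputable section

open Filter Topology

namespace S9
lemma continuous_dDiag : Continuous dDiag := Metric.continuous_infDist_pt _
lemma dDiag_nonneg (x : E2) : 0 ≤ dDiag x := Metric.infDist_nonneg
lemma zero_mem_diag : (0 : E2) ∈ diagSet := by simp [diagSet]
lemma dDiag_le_norm (x : E2) : dDiag x ≤ ‖x‖ := by
  simpa [dDiag, dist_zero_right] using Metric.infDist_le_dist_of_mem (x := x) zero_mem_diag

def minf (k : ℕ) (c : Fin k → E2) (x : E2) : ℝ :=
  Finset.univ.inf' Finset.univ_nonempty (fun j : Fin (k+1) => cdistC k c j x)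

lemma minf_le (k : ℕ) (c : Fin k → E2) (x : E2) (j : Fin (k+1)) :
    minf k c x ≤ cdistC k c j x := Finset.inf'_le _ (Finset.mem_univ _)

lemma cdistC_castSucc (k : ℕ) (c : Fin k → E2) (i : Fin k) (x : E2) :
    cdistC k c i.castSucc x = dist x (c i) := by
  simp [cdistC, i.isLt]

lemma cdistC_last (k : ℕ) (c : Fin k → E2) (x : E2) :
    cdistC k c (Fin.last k) x = dDiag x := by simp [cdistC]

lemma minf_le_dist (k : ℕ) (c : Fin k → E2) (x : E2) (i : Fin k) :
    minf k c x ≤ dist x (c i) := by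
  simpa [cdistC_castSucc] using minf_le k c x i.castSucc

lemma minf_le_dDiag (k : ℕ) (c : Fin k → E2) (x : E2) : minf k c x ≤ dDiag x := by
  simpa [cdistC_last] using minf_le k c x (Fin.last k)

lemma cdistC_nonneg (k : ℕ) (c : Fin k → E2) (j : Fin (k+1)) (x : E2) :
    0 ≤ cdistC k c j x := by
  unfold cdistC; split
  · exact dist_nonneg
  · exact dDiag_nonneg x

lemma minf_nonneg (k : ℕ) (c : Fin k → E2) (x : E2) : 0 ≤ minf k c x :=
  Finset.le_inf' _ _ fun j _ => cdistC_nonneg k c j x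

lemma minf_achieved (k : ℕ) (c : Fin k → E2) (x : E2) :
    minf k c x = dDiag x ∨ ∃ i : Fin k, minf k c x = dist x (c i) := by
  obtain ⟨j, -, hj⟩ := Finset.exists_mem_eq_inf' (Finset.univ_nonempty)
    (fun j : Fin (k+1) => cdistC k c j x)
  by_cases h : (j : ℕ) < k
  · exact Or.inr ⟨⟨j, h⟩, by rw [minf, hj]; simp [cdistC, h]⟩
  · exact Or.inl (by rw [minf, hj]; simp [cdistC, h])

lemma minf_le_add (k : ℕ) (c : Fin k → E2) (x y : E2) :
    minf k c x ≤ minf k c y + dist x y := by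
  rcases minf_achieved k c y with hd | ⟨i, hi⟩
  · calc minf k c x ≤ dDiag x := minf_le_dDiag k c x
    _ ≤ dDiag y + dist x y := Metric.infDist_le_infDist_add_dist
    _ = minf k c y + dist x y := by rw [hd]
  · calc minf k c x ≤ dist x (c i) := minf_le_dist k c x i
    _ ≤ dist x y + dist y (c i) := dist_triangle _ _ _
    _ = minf k c y + dist x y := by rw [hi]; ring

lemma continuous_minf (k : ℕ) (c : Fin k → E2) : Continuous (minf k c) :=
  (LipschitzWith.of_le_add fun x y => minf_le_add k c x y).continuous

lemma minf_le_add_sum (k : ℕ) (c c' : Fin k → E2) (x : E2) :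
    minf k c x ≤ minf k c' x + ∑ i : Fin k, dist (c i) (c' i) := by
  have hsum : ∀ i : Fin k, dist (c i) (c' i) ≤ ∑ i : Fin k, dist (c i) (c' i) := fun i =>
    Finset.single_le_sum (fun j _ => dist_nonneg) (Finset.mem_univ i)
  have hnn : (0:ℝ) ≤ ∑ i : Fin k, dist (c i) (c' i) :=
    Finset.sum_nonneg fun j _ => dist_nonneg
  rcases minf_achieved k c' x with hd | ⟨i, hi⟩
  · calc minf k c x ≤ dDiag x := minf_le_dDiag k c x
    _ = minf k c' x := hd.symm
    _ ≤ _ := le_add_of_nonneg_right hnn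
  · calc minf k c x ≤ dist x (c i) := minf_le_dist k c x i
    _ ≤ dist x (c' i) + dist (c i) (c' i) := by
        have := dist_triangle x (c' i) (c i); simpa [dist_comm] using this
    _ ≤ minf k c' x + ∑ i : Fin k, dist (c i) (c' i) := by
        rw [hi]; exact add_le_add le_rfl (hsum i)

lemma tendsto_minf {k : ℕ} {u : ℕ → Fin k → E2} {c : Fin k → E2}
    (h : Tendsto u atTop (𝓝 c)) (x : E2) :
    Tendsto (fun n => minf k (u n) x) atTop (𝓝 (minf k c x)) := by
  have hS : Tendsto (fun n => ∑ i : Fin k, dist (u n i) (c i)) atTop (𝓝 0) := by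
    have : Tendsto (fun n => ∑ i : Fin k, dist (u n i) (c i)) atTop
        (𝓝 (∑ i : Fin k, (0:ℝ))) := by
      refine tendsto_finset_sum _ fun i _ => ?_
      exact tendsto_iff_dist_tendsto_zero.1 (tendsto_pi_nhds.1 h i)
    simpa using this
  rw [tendsto_iff_dist_tendsto_zero]
  refine squeeze_zero (fun n => dist_nonneg) (fun n => ?_) hS
  rw [Real.dist_eq, abs_le]
  constructor
  · have := minf_le_add_sum k c (u n) x
    simp only [dist_comm] at this ⊢; linarith
  · have := minf_le_add_sum k (u n) c x
    linarith
end S9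

namespace S9
lemma continuous_cdistC (k : ℕ) (c : Fin k → E2) (j : Fin (k+1)) :
    Continuous (cdistC k c j) := by
  unfold cdistC; split
  · exact continuous_id.dist continuous_const
  · exact continuous_dDiag

lemma continuous_eval (i : Fin 2) : Continuous fun x : E2 => x i :=
  (EuclideanSpace.proj (𝕜 := ℝ) i).continuous

lemma isOpen_Omega : IsOpen Omega :=
  isOpen_lt (continuous_eval 0) (continuous_eval 1)

lemma isClosed_OmegaBar : IsClosed OmegaBar := by
  have : OmegaBar = {x : E2 | x 0 ≤ x 1} := by
    ext x; simp [OmegaBar, Omega, diagSet, le_iff_lt_or_eq]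
  rw [this]
  exact isClosed_le (continuous_eval 0) (continuous_eval 1)

lemma measurableSet_Vcell (k : ℕ) (c : Fin k → E2) (j : Fin (k+1)) :
    MeasurableSet (Vcell k c j) := by
  have : Vcell k c j = Omega ∩
      ((⋂ j' : Fin (k+1), {x | j' < j → cdistC k c j x ≤ cdistC k c j' x}) ∩
       (⋂ j' : Fin (k+1), {x | j < j' → cdistC k c j x < cdistC k c j' x})) := by
    ext x; simp only [Vcell, Set.mem_setOf_eq, Set.mem_inter_iff, Set.mem_iInter]
    all_goals tauto
  rw [this]
  refine isOpen_Omega.measurableSet.inter (MeasurableSet.inter ?_ ?_)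
  · refine MeasurableSet.iInter fun j' => ?_
    by_cases h : j' < j
    · simp only [h, true_implies]
      exact (isClosed_le (continuous_cdistC k c j) (continuous_cdistC k c j')).measurableSet
    · simp only [h, false_implies, Set.setOf_true]; exact MeasurableSet.univ
  · refine MeasurableSet.iInter fun j' => ?_
    by_cases h : j < j'
    · simp only [h, true_implies]
      exact (isOpen_lt (continuous_cdistC k c j) (continuous_cdistC k c j')).measurableSet
    · simp only [h, false_implies, Set.setOf_true]; exact MeasurableSet.univ

lemma eq_minf_of_mem_Vcell {k : ℕ} {c : Fin k → E2} {j : Fin (k+1)} {x : E2}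
    (hx : x ∈ Vcell k c j) : cdistC k c j x = minf k c x := by
  refine le_antisymm (Finset.le_inf' _ _ fun j' _ => ?_) (minf_le k c x j)
  rcases lt_trichotomy j' j with h | h | h
  · exact hx.2.1 j' h
  · rw [h]
  · exact (hx.2.2 j' h).le

lemma iUnion_Vcell (k : ℕ) (c : Fin k → E2) : (⋃ j, Vcell k c j) = Omega := by
  apply Set.Subset.antisymm
  · exact Set.iUnion_subset fun j x hx => hx.1
  · intro x hx
    set F : Finset (Fin (k+1)) :=
      Finset.univ.filter (fun j => cdistC k c j x = minf k c x) with hF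
    have hFne : F.Nonempty := by
      obtain ⟨j, -, hj⟩ := Finset.exists_mem_eq_inf' (Finset.univ_nonempty)
        (fun j : Fin (k+1) => cdistC k c j x)
      exact ⟨j, by rw [hF]; exact Finset.mem_filter.2 ⟨Finset.mem_univ _, hj.symm⟩⟩
    set j₀ := F.max' hFne with hj₀
    have hj₀F : j₀ ∈ F := F.max'_mem hFne
    have hj₀eq : cdistC k c j₀ x = minf k c x := by
      simpa [hF] using hj₀F
    refine Set.mem_iUnion.2 ⟨j₀, hx, fun j' _ => ?_, fun j' hj' => ?_⟩
    · rw [hj₀eq]; exact minf_le k c x j'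
    · rw [hj₀eq]
      refine lt_of_le_of_ne (minf_le k c x j') fun heq => ?_
      have : j' ∈ F := by simp [hF, heq.symm]
      exact absurd (F.le_max' j' this) (not_le.2 hj')

lemma disjoint_Vcell (k : ℕ) (c : Fin k → E2) : Pairwise (Function.onFun Disjoint (Vcell k c)) := by
  have key : ∀ j j' : Fin (k+1), j < j' → Disjoint (Vcell k c j) (Vcell k c j') := by
    intro j j' h
    rw [Set.disjoint_left]
    intro x hx hx'
    exact absurd (hx'.2.1 j h) (not_le.2 (hx.2.2 j' h))
  intro j j' hne
  rcases hne.lt_or_gt with h | h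
  · exact key _ _ h
  · exact (key _ _ h).symm

lemma distortion_eq (p : ℝ) (μ : Measure E2) (k : ℕ) (c : Fin k → E2) :
    distortion p μ k c
      = (∫⁻ x in Omega, ENNReal.ofReal (minf k c x ^ p) ∂μ) ^ (1/p) := by
  unfold distortion; congr 1
  calc ∑ j : Fin (k+1), ∫⁻ x in Vcell k c j, ENNReal.ofReal (cdistC k c j x ^ p) ∂μ
      = ∑ j : Fin (k+1), ∫⁻ x in Vcell k c j, ENNReal.ofReal (minf k c x ^ p) ∂μ := by
        refine Finset.sum_congr rfl fun j _ => ?_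
        refine setLIntegral_congr_fun (measurableSet_Vcell k c j) (fun x hx => ?_)
        rw [eq_minf_of_mem_Vcell hx]
    _ = ∑' j : Fin (k+1), ∫⁻ x in Vcell k c j, ENNReal.ofReal (minf k c x ^ p) ∂μ :=
        (tsum_fintype _).symm
    _ = ∫⁻ x in ⋃ j, Vcell k c j, ENNReal.ofReal (minf k c x ^ p) ∂μ :=
        (lintegral_iUnion (measurableSet_Vcell k c) (disjoint_Vcell k c) _).symm
    _ = _ := by rw [iUnion_Vcell]

lemma measurable_integrand (p : ℝ) (hp : 0 ≤ p) (k : ℕ) (c : Fin k → E2) :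
    Measurable (fun x => ENNReal.ofReal (minf k c x ^ p)) :=
  (ENNReal.continuous_ofReal.comp
    ((Real.continuous_rpow_const hp).comp (continuous_minf k c))).measurable
end S9

namespace S9
def Dint (p : ℝ) (μ : Measure E2) (k : ℕ) (c : Fin k → E2) : ℝ≥0∞ :=
  ∫⁻ x in Omega, ENNReal.ofReal (minf k c x ^ p) ∂μ

lemma distortion_eq' (p : ℝ) (μ : Measure E2) (k : ℕ) (c : Fin k → E2) :
    distortion p μ k c = (Dint p μ k c) ^ (1/p) := distortion_eq p μ k c

lemma distortion_rpow {p : ℝ} (hp : 0 < p) (μ : Measure E2) (k : ℕ) (c : Fin k → E2) :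
    (distortion p μ k c) ^ p = Dint p μ k c := by
  rw [distortion_eq', ← ENNReal.rpow_mul, one_div_mul_cancel hp.ne', ENNReal.rpow_one]

lemma rpow_inv_le_iff {x lam : ℝ≥0∞} {p : ℝ} (hp : 0 < p) :
    x ^ (1/p) ≤ lam ↔ x ≤ lam ^ p := by
  rw [← ENNReal.rpow_le_rpow_iff (x := x ^ (1/p)) (y := lam) hp, ← ENNReal.rpow_mul,
    one_div_mul_cancel hp.ne', ENNReal.rpow_one]
end S9


/-- Lemma: compactness of sublevel sets of the distortion.
For every `0 ≤ λ < R_{k-1}^*` (with the convention `R_0^* = Pers_p(μ)^{1/p}`, which is the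
value of `Rstar` for the empty codebook), the sublevel set `{c ∈ Ω̄^k : R_{k,p}(c) ≤ λ}` is
compact. -/
theorem statement9 (p : ℝ) (hp : 1 ≤ p) (k : ℕ) (hk : 1 ≤ k) (μ : Measure E2)
    (hμΩ : μ Omegaᶜ = 0) (hμp : Pers p μ < ⊤)
    (lam : ℝ≥0∞) (hlam : lam < Rstar p μ (k - 1)) :
    IsCompact {c : Fin k → E2 | (∀ j, c j ∈ OmegaBar) ∧ distortion p μ k c ≤ lam} := by
  obtain ⟨m, rfl⟩ : ∃ m, k = m + 1 := ⟨k - 1, (Nat.succ_pred_eq_of_pos hk).symm⟩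
  have hp0 : 0 < p := lt_of_lt_of_le one_pos hp
  simp only [Nat.add_sub_cancel] at hlam
  set S := {c : Fin (m+1) → E2 | (∀ j, c j ∈ OmegaBar) ∧ distortion p μ (m+1) c ≤ lam}
    with hS
  have hSD : S = {c : Fin (m+1) → E2 |
      (∀ j, c j ∈ OmegaBar) ∧ S9.Dint p μ (m+1) c ≤ lam ^ p} := by
    ext c
    rw [hS, Set.mem_setOf_eq, Set.mem_setOf_eq, S9.distortion_eq', S9.rpow_inv_le_iff hp0]
  -- Closedness of the sublevel set
  have hclosed : IsClosed S := by
    rw [hSD]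
    refine IsSeqClosed.isClosed fun u c hu huc => ?_
    refine ⟨fun j => S9.isClosed_OmegaBar.mem_of_tendsto (tendsto_pi_nhds.1 huc j)
      (Eventually.of_forall fun n => (hu n).1 j), ?_⟩
    have hpt : ∀ x : E2, ENNReal.ofReal (S9.minf (m+1) c x ^ p)
        = liminf (fun n => ENNReal.ofReal (S9.minf (m+1) (u n) x ^ p)) atTop := by
      intro x
      refine (Filter.Tendsto.liminf_eq ?_).symm
      exact (ENNReal.continuous_ofReal.tendsto _).comp
        (((Real.continuous_rpow_const hp0.le).tendsto _).comp (S9.tendsto_minf huc x))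
    calc S9.Dint p μ (m+1) c
        = ∫⁻ x in Omega,
            liminf (fun n => ENNReal.ofReal (S9.minf (m+1) (u n) x ^ p)) atTop ∂μ :=
          lintegral_congr fun x => hpt x
      _ ≤ liminf (fun n => S9.Dint p μ (m+1) (u n)) atTop :=
          lintegral_liminf_le fun n => S9.measurable_integrand p hp0.le (m+1) (u n)
      _ ≤ lam ^ p :=
          liminf_le_of_frequently_le (Frequently.of_forall fun n => (hu n).2)
  -- Tail of the persistence integral
  set f : E2 → ℝ≥0∞ := fun x => ENNReal.ofReal (dDiag x ^ p) with hf
  have hfmeas : Measurable f := (ENNReal.continuous_ofReal.comp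
    ((Real.continuous_rpow_const hp0.le).comp S9.continuous_dDiag)).measurable
  set s : ℕ → Set E2 := fun n => {x : E2 | (n:ℝ) ≤ ‖x‖} with hs
  have hsm : ∀ n, MeasurableSet (s n) := fun n =>
    (isClosed_le continuous_const continuous_norm).measurableSet
  set T : ℕ → ℝ≥0∞ := fun n => ∫⁻ x in s n, f x ∂(μ.restrict Omega) with hT
  have htail : Tendsto T atTop (𝓝 0) := by
    have hTν : T = fun n => ((μ.restrict Omega).withDensity f) (s n) :=
      funext fun n => (withDensity_apply f (hsm n)).symm
    have hanti : Antitone s := fun a b hab x hx =>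
      show (a:ℝ) ≤ ‖x‖ from le_trans (Nat.cast_le.2 hab) hx
    have hνfin : ((μ.restrict Omega).withDensity f) (s 0) ≠ ⊤ := by
      refine ne_top_of_le_ne_top ?_ (measure_mono (Set.subset_univ _))
      rw [withDensity_apply _ MeasurableSet.univ, Measure.restrict_univ]
      exact hμp.ne
    have hmain := tendsto_measure_iInter_atTop (μ := (μ.restrict Omega).withDensity f)
      (fun n => (hsm n).nullMeasurableSet) hanti ⟨0, hνfin⟩
    have hempty : (⋂ n, s n) = ∅ := by
      ext x
      simp only [Set.mem_iInter, Set.mem_empty_iff_false, iff_false, not_forall, hs,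
        Set.mem_setOf_eq, not_le]
      exact exists_nat_gt ‖x‖
    rw [hempty, measure_empty] at hmain
    rw [hTν]
    exact hmain
  have hlam2 : lam ^ p < (Rstar p μ m) ^ p := ENNReal.rpow_lt_rpow hlam hp0
  have htendadd : Tendsto (fun n => lam ^ p + T n) atTop (𝓝 (lam ^ p)) := by
    simpa using htail.const_add (lam ^ p)
  obtain ⟨N, hN⟩ := (htendadd.eventually_lt_const hlam2).exists
  -- Key estimate: a far-away centroid can be removed at small cost
  have hkey : ∀ c : Fin (m+1) → E2, (∀ j, c j ∈ OmegaBar) → ∀ j₀ : Fin (m+1),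
      (2*N : ℝ) < ‖c j₀‖ → (Rstar p μ m) ^ p ≤ S9.Dint p μ (m+1) c + T N := by
    intro c hc j₀ hfar
    set c' : Fin m → E2 := fun i => c (j₀.succAbove i) with hc'
    have h1 : Rstar p μ m ≤ distortion p μ m c' :=
      iInf_le_of_le c' (iInf_le_of_le (fun i => hc _) le_rfl)
    have h2 : (Rstar p μ m) ^ p ≤ S9.Dint p μ m c' := by
      have := ENNReal.rpow_le_rpow h1 hp0.le
      rwa [S9.distortion_rpow hp0] at this
    have hpt : ∀ x : E2, ENNReal.ofReal (S9.minf m c' x ^ p)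
        ≤ ENNReal.ofReal (S9.minf (m+1) c x ^ p) + (s N).indicator f x := by
      intro x
      by_cases hxN : ‖x‖ < N
      · have h3 : ‖c j₀‖ ≤ dist x (c j₀) + ‖x‖ := by
          have := dist_triangle (c j₀) x 0
          simpa [dist_comm, dist_zero_right] using this
        have hdn := S9.dDiag_le_norm x
        have h2' : S9.minf m c' x ≤ S9.minf (m+1) c x := by
          rcases S9.minf_achieved (m+1) c x with hd | ⟨i, hi⟩
          · rw [hd]; exact S9.minf_le_dDiag m c' x
          · by_cases hij : i = j₀
            · exfalso
              have hle := S9.minf_le_dDiag (m+1) c x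
              rw [hi, hij] at hle
              linarith
            · obtain ⟨i', hi'⟩ := Fin.exists_succAbove_eq hij
              rw [hi]
              simpa [hc', hi'] using S9.minf_le_dist m c' x i'
        exact le_trans (ENNReal.ofReal_le_ofReal
          (Real.rpow_le_rpow (S9.minf_nonneg _ _ _) h2' hp0.le)) le_self_add
      · have hmemN : x ∈ s N := not_lt.1 hxN
        rw [Set.indicator_of_mem hmemN]
        exact le_trans (ENNReal.ofReal_le_ofReal
          (Real.rpow_le_rpow (S9.minf_nonneg _ _ _) (S9.minf_le_dDiag m c' x) hp0.le))
          le_add_self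
    have h4 : S9.Dint p μ m c' ≤ S9.Dint p μ (m+1) c + T N := by
      have hle : S9.Dint p μ m c' ≤ ∫⁻ x in Omega,
          (ENNReal.ofReal (S9.minf (m+1) c x ^ p) + (s N).indicator f x) ∂μ :=
        lintegral_mono hpt
      rwa [lintegral_add_right _ (hfmeas.indicator (hsm N)),
        lintegral_indicator (hsm N)] at hle
    exact le_trans h2 h4
  -- Boundedness
  have hbound : ∀ c ∈ S, ∀ j, ‖c j‖ ≤ 2*N := by
    intro c hcS j
    by_contra hgt
    push_neg at hgt
    rw [hSD] at hcS
    have hge := hkey c hcS.1 j hgt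
    have hlt : S9.Dint p μ (m+1) c + T N < (Rstar p μ m) ^ p :=
      lt_of_le_of_lt (add_le_add hcS.2 le_rfl) hN
    exact absurd hge (not_le.2 hlt)
  -- Conclusion
  have hK : IsCompact {c : Fin (m+1) → E2 |
      ∀ j, c j ∈ OmegaBar ∩ Metric.closedBall 0 (2*N)} := by
    have hKeq : {c : Fin (m+1) → E2 | ∀ j, c j ∈ OmegaBar ∩ Metric.closedBall 0 (2*N)}
        = Set.univ.pi (fun _ : Fin (m+1) => OmegaBar ∩ Metric.closedBall 0 (2*N)) := by
      ext c; simp [Set.mem_univ_pi]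
    rw [hKeq]
    exact isCompact_univ_pi fun i =>
      (isCompact_closedBall (0 : E2) _).inter_left S9.isClosed_OmegaBar
  refine hK.of_isClosed_subset hclosed ?_
  intro c hcS j
  exact ⟨hcS.1 j, by
    simpa [Metric.mem_closedBall, dist_zero_right] using hbound c hcS j⟩


end
end

section
/- Let L > 0, 0 < D ≤ L, k ≥ 1, and let c*, c ∈ Ω^k be two codebooks with all centroids in A_L and satisfying ‖c_j* − ∂Ω‖ ≥ D and ‖c_j − ∂Ω‖ ≥ D for all 1 ≤ j ≤ k. Let x ∈ A_L and 1 ≤ j ≤ k. If x ∈ V_j(c*) ∩ V_{k+1}(c), then the Euclidean distance from x to the topological boundary of V_j(c*) is at most (7L²/(2D²))·‖c* − c‖. Symmetrically, if x ∈ V_{k+1}(c*) ∩ V_j(c), then the distance from x to the topological boundary of V_{k+1}(c*) is at most (7L²/(2D²))·‖c* − c‖. Here ‖c* − c‖ denotes the Euclidean norm of the difference of the codebooks viewed as vectors in ℝ^{2k}. -/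
open MeasureTheory ENNReal Set

noncomputable section

-- Auxiliary lemmas for statement10
namespace Statement10Aux

lemma sqrt2_pos : (0:ℝ) < Real.sqrt 2 := by positivity

lemma sqrt2_sq : (Real.sqrt 2)^2 = 2 := Real.sq_sqrt (by norm_num)

lemma sqrt2_le : Real.sqrt 2 ≤ 1.5 := by nlinarith [sqrt2_sq, sqrt2_pos]

lemma dist_eq2 (x y : E2) : dist x y = Real.sqrt ((x 0 - y 0)^2 + (x 1 - y 1)^2) := by
  rw [EuclideanSpace.dist_eq, Fin.sum_univ_two]
  simp [Real.dist_eq, sq_abs]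

/-- auxiliary point constructor -/
def mk2 (a b : ℝ) : E2 := (WithLp.equiv 2 (Fin 2 → ℝ)).symm ![a, b]

lemma mk2_0 (a b : ℝ) : mk2 a b 0 = a := rfl
lemma mk2_1 (a b : ℝ) : mk2 a b 1 = b := rfl

lemma dDiag_eq (x : E2) : dDiag x = |x 1 - x 0| / Real.sqrt 2 := by
  have hne : diagSet.Nonempty := ⟨mk2 0 0, by simp [diagSet, mk2_0, mk2_1]⟩
  have hr : (0:ℝ) < Real.sqrt 2 := sqrt2_pos
  apply le_antisymm
  · have hqmem : mk2 ((x 0 + x 1)/2) ((x 0 + x 1)/2) ∈ diagSet := by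
      simp [diagSet, mk2_0, mk2_1]
    have hdq : dist x (mk2 ((x 0 + x 1)/2) ((x 0 + x 1)/2)) = |x 1 - x 0| / Real.sqrt 2 := by
      rw [dist_eq2, mk2_0, mk2_1,
        show (x 0 - (x 0 + x 1)/2)^2 + (x 1 - (x 0 + x 1)/2)^2 = (x 1 - x 0)^2/2 by ring,
        Real.sqrt_div' _ (by positivity), Real.sqrt_sq_eq_abs]
    rw [← hdq]
    exact Metric.infDist_le_dist_of_mem hqmem
  · by_contra hcon
    push_neg at hcon
    obtain ⟨p, hp, hdp⟩ := (Metric.infDist_lt_iff hne).1 hcon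
    have hp01 : p 0 = p 1 := hp
    rw [dist_eq2] at hdp
    have hle : |x 1 - x 0| / Real.sqrt 2 ≤ Real.sqrt ((x 0 - p 0)^2 + (x 1 - p 1)^2) := by
      rw [show |x 1 - x 0| / Real.sqrt 2 = Real.sqrt ((x 1 - x 0)^2/2) by
        rw [Real.sqrt_div' _ (by positivity), Real.sqrt_sq_eq_abs]]
      apply Real.sqrt_le_sqrt
      rw [hp01]
      nlinarith [sq_nonneg (x 0 - p 1 + (x 1 - p 1))]
    linarith

lemma infDist_frontier_le {s : Set E2} {x y : E2} (hx : x ∈ s) (hy : y ∉ s) :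
    Metric.infDist x (frontier s) ≤ dist x y := by
  obtain ⟨z, hz, hz'⟩ := exists_mem_frontier_infDist_compl_eq_dist hx
    (by intro h; exact hy (h ▸ mem_univ y))
  calc Metric.infDist x (frontier s) ≤ dist x z := Metric.infDist_le_dist_of_mem hz
    _ = Metric.infDist x sᶜ := hz'.symm
    _ ≤ dist x y := Metric.infDist_le_dist_of_mem hy

lemma abs_sub_le_of_ballA {L : ℝ} {x z : E2} (hx : x ∈ ballA L) (hz : z ∈ ballA L) :
    |x 0 - z 0| + |x 1 - z 1| ≤ Real.sqrt 2 * L := by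
  have hx' : |x 0 + L / Real.sqrt 8| + |x 1 - L / Real.sqrt 8| ≤ L / Real.sqrt 2 := hx
  have hz' : |z 0 + L / Real.sqrt 8| + |z 1 - L / Real.sqrt 8| ≤ L / Real.sqrt 2 := hz
  have h1 : |x 0 - z 0| ≤ |x 0 + L / Real.sqrt 8| + |z 0 + L / Real.sqrt 8| := by
    have := abs_sub (x 0 + L / Real.sqrt 8) (z 0 + L / Real.sqrt 8)
    calc |x 0 - z 0| = |(x 0 + L / Real.sqrt 8) - (z 0 + L / Real.sqrt 8)| := by ring_nf
      _ ≤ _ := abs_sub _ _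
  have h2 : |x 1 - z 1| ≤ |x 1 - L / Real.sqrt 8| + |z 1 - L / Real.sqrt 8| := by
    calc |x 1 - z 1| = |(x 1 - L / Real.sqrt 8) - (z 1 - L / Real.sqrt 8)| := by ring_nf
      _ ≤ _ := abs_sub _ _
  have hLr : L / Real.sqrt 2 * 2 = Real.sqrt 2 * L := by
    field_simp
    linear_combination (-L) * sqrt2_sq
  linarith [h1, h2, hx', hz']

lemma dist_le_of_ballA {L : ℝ} {x z : E2} (hx : x ∈ ballA L) (hz : z ∈ ballA L) :
    dist x z ≤ Real.sqrt 2 * L := by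
  rw [dist_eq2]
  have h := abs_sub_le_of_ballA hx hz
  have h2 : (x 0 - z 0)^2 + (x 1 - z 1)^2 ≤ (|x 0 - z 0| + |x 1 - z 1|)^2 := by
    nlinarith [abs_nonneg (x 0 - z 0), abs_nonneg (x 1 - z 1), sq_abs (x 0 - z 0),
      sq_abs (x 1 - z 1), mul_nonneg (abs_nonneg (x 0 - z 0)) (abs_nonneg (x 1 - z 1))]
  calc Real.sqrt ((x 0 - z 0)^2 + (x 1 - z 1)^2)
      ≤ Real.sqrt ((|x 0 - z 0| + |x 1 - z 1|)^2) := Real.sqrt_le_sqrt h2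
    _ = |x 0 - z 0| + |x 1 - z 1| := Real.sqrt_sq (by positivity)
    _ ≤ Real.sqrt 2 * L := h

lemma dDiag_le_of_ballA {L : ℝ} {x : E2} (hL : 0 ≤ L) (hx : x ∈ ballA L) : dDiag x ≤ L := by
  have hx' : |x 0 + L / Real.sqrt 8| + |x 1 - L / Real.sqrt 8| ≤ L / Real.sqrt 2 := hx
  have h8 : Real.sqrt 8 = 2 * Real.sqrt 2 := by
    rw [show (8:ℝ) = 2^2*2 by norm_num, Real.sqrt_mul (by positivity), Real.sqrt_sq (by norm_num)]
  have hc8nn : (0:ℝ) ≤ L / Real.sqrt 8 := div_nonneg hL (Real.sqrt_nonneg _)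
  have hc8 : 2*(L/Real.sqrt 8) = L / Real.sqrt 2 := by
    rw [h8]
    field_simp
  have h1 : |x 1 - x 0| ≤ (|x 1 - L / Real.sqrt 8| + |x 0 + L / Real.sqrt 8|) + 2*(L/Real.sqrt 8) := by
    calc |x 1 - x 0| = |((x 1 - L / Real.sqrt 8) - (x 0 + L / Real.sqrt 8)) + 2*(L/Real.sqrt 8)| := by
          ring_nf
      _ ≤ |(x 1 - L / Real.sqrt 8) - (x 0 + L / Real.sqrt 8)| + |2*(L/Real.sqrt 8)| := abs_add_le _ _
      _ ≤ (|x 1 - L / Real.sqrt 8| + |x 0 + L / Real.sqrt 8|) + |2*(L/Real.sqrt 8)| := by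
          have := abs_sub (x 1 - L / Real.sqrt 8) (x 0 + L / Real.sqrt 8)
          linarith
      _ = (|x 1 - L / Real.sqrt 8| + |x 0 + L / Real.sqrt 8|) + 2*(L/Real.sqrt 8) := by
          rw [abs_of_nonneg (show (0:ℝ) ≤ 2*(L/Real.sqrt 8) by linarith)]
  rw [dDiag_eq, div_le_iff₀ sqrt2_pos]
  have h2s : 2 * (L / Real.sqrt 2) = L * Real.sqrt 2 := by
    field_simp
    linear_combination (-L) * sqrt2_sq
  linarith [h1, hx', hc8]

lemma cdistC_castSucc (k : ℕ) (c : Fin k → E2) (j : Fin k) (x : E2) :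
    cdistC k c j.castSucc x = dist x (c j) := by
  simp [cdistC]

lemma cdistC_last (k : ℕ) (c : Fin k → E2) (x : E2) :
    cdistC k c (Fin.last k) x = dDiag x := by
  simp [cdistC]

lemma single_le_cbDist (k : ℕ) (c c' : Fin k → E2) (j : Fin k) :
    dist (c j) (c' j) ≤ cbDist k c c' := by
  rw [cbDist]
  have h : dist (c j) (c' j)^2 ≤ ∑ j' : Fin k, dist (c j') (c' j')^2 :=
    Finset.single_le_sum (f := fun j' => dist (c j') (c' j')^2)
      (fun i _ => sq_nonneg _) (Finset.mem_univ j)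
  calc dist (c j) (c' j) = Real.sqrt (dist (c j) (c' j)^2) := (Real.sqrt_sq dist_nonneg).symm
    _ ≤ _ := Real.sqrt_le_sqrt h

lemma cbDist_nonneg (k : ℕ) (c c' : Fin k → E2) : 0 ≤ cbDist k c c' := Real.sqrt_nonneg _

end Statement10Aux

namespace Statement10Aux

lemma key1 {L D s g0 D' cb : ℝ} (hL : 0 < L) (hD : 0 < D) (hDL : D ≤ L)
    (hD'D : D ≤ D') (hg0 : 0 ≤ g0) (hg0s : g0 < s) (hsL : s ≤ L) (hscb : s - g0 ≤ cb)
    (hcb : 0 ≤ cb) :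
    (s^2 - g0^2)/(2*D') ≤ 7*L^2/(2*D^2)*cb := by
  have hD' : 0 < D' := lt_of_lt_of_le hD hD'D
  rw [div_le_iff₀ (by linarith : (0:ℝ) < 2*D')]
  apply le_of_mul_le_mul_right _ (show (0:ℝ) < 2*D^2 by positivity)
  have e2 : 7*L^2/(2*D^2)*cb*(2*D')*(2*D^2) = 7*L^2*cb*(2*D') := by
    field_simp
    try ring
  have hA : s^2 - g0^2 ≤ cb*(2*L) := by nlinarith
  have hDD2 : D^2 ≤ L*D' := by nlinarith
  have hG : (s^2-g0^2)*(2*D^2) ≤ 7*L^2*cb*(2*D') := by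
    nlinarith [mul_nonneg hL.le hcb, mul_nonneg (mul_nonneg hL.le hcb) hD'.le, hA, hDD2,
      sq_nonneg D, mul_pos hD hD]
  linarith [e2, hG]

lemma key2 {L D s g0 D2 cb B : ℝ} (hL : 0 < L) (hD : 0 < D) (hDL : D ≤ L)
    (hD2D : D ≤ D2) (hs : 0 < s) (hg0s : s ≤ g0) (hgL : g0 ≤ 1.5*L)
    (hgscb : g0 - s < cb) (hcb : 0 < cb) (hB : B*(2*D^2) = 7*L^2*cb) :
    g0*(g0-s) < B*(D2+g0-s) := by
  have hg0pos : 0 < g0 := lt_of_lt_of_le hs hg0s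
  have s1 : g0*(g0-s) < g0*cb := mul_lt_mul_of_pos_left hgscb hg0pos
  have s2 : g0*cb ≤ 1.5*L*cb := mul_le_mul_of_nonneg_right (by linarith) hcb.le
  have step2 : (1.5*L)*cb*(2*D^2) ≤ 7*L^2*cb*D := by
    nlinarith [mul_nonneg (mul_nonneg hL.le hcb.le) hD.le,
      mul_nonneg (mul_nonneg (mul_nonneg hL.le hL.le) hcb.le) hD.le]
  have step3 : 7*L^2*cb*D ≤ B*(D2+g0-s)*(2*D^2) := by
    have e : B*(D2+g0-s)*(2*D^2) = 7*L^2*cb*(D2+g0-s) := by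
      linear_combination (D2+g0-s)*hB
    rw [e]
    exact mul_le_mul_of_nonneg_left (by linarith) (by positivity)
  have m1 : g0*(g0-s)*(2*D^2) < (1.5*L)*cb*(2*D^2) := by
    apply mul_lt_mul_of_pos_right _ (by positivity)
    linarith
  have hfin : g0*(g0-s)*(2*D^2) < B*(D2+g0-s)*(2*D^2) := by linarith
  exact lt_of_mul_lt_mul_right hfin (by positivity)

end Statement10Aux

set_option maxHeartbeats 1000000 in
open Statement10Aux in
/-- Lemma: misclassified points near the diagonal cell are close to the
boundary of their cell.
If all centroids of `c*, c ∈ Ω^k` lie in `A_L` at distance at least `D` from the diagonal,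
and `x ∈ A_L` is in `V_j(c*) ∩ V_{k+1}(c)` (resp. `V_{k+1}(c*) ∩ V_j(c)`), then the distance
from `x` to the topological boundary of `V_j(c*)` (resp. of `V_{k+1}(c*)`) is at most
`(7L²/(2D²)) ‖c* - c‖`. -/
theorem statement10 (L D : ℝ) (hL : 0 < L) (hD : 0 < D) (hDL : D ≤ L)
    (k : ℕ) (hk : 1 ≤ k) (cstar c : Fin k → E2)
    (hcs : ∀ j, cstar j ∈ Omega ∩ ballA L) (hc : ∀ j, c j ∈ Omega ∩ ballA L)
    (hcsD : ∀ j, D ≤ dDiag (cstar j)) (hcD : ∀ j, D ≤ dDiag (c j))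
    (x : E2) (hx : x ∈ ballA L) (j : Fin k) :
    (x ∈ Vcell k cstar j.castSucc ∩ Vcell k c (Fin.last k) →
      Metric.infDist x (frontier (Vcell k cstar j.castSucc)) ≤
        7 * L ^ 2 / (2 * D ^ 2) * cbDist k cstar c) ∧
    (x ∈ Vcell k cstar (Fin.last k) ∩ Vcell k c j.castSucc →
      Metric.infDist x (frontier (Vcell k cstar (Fin.last k))) ≤
        7 * L ^ 2 / (2 * D ^ 2) * cbDist k cstar c) := by
  have hr : (0:ℝ) < Real.sqrt 2 := sqrt2_pos
  have hr2 : (Real.sqrt 2)^2 = 2 := sqrt2_sq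
  have hr15 : Real.sqrt 2 ≤ 1.5 := sqrt2_le
  have hcb0 : 0 ≤ cbDist k cstar c := cbDist_nonneg k cstar c
  have hdcb : dist (cstar j) (c j) ≤ cbDist k cstar c := single_le_cbDist k cstar c j
  constructor
  · rintro ⟨hxj, hxlast⟩
    have hxO : x 0 < x 1 := hxj.1
    have haO : (cstar j) 0 < (cstar j) 1 := (hcs j).1
    set s := dDiag x with hs_def
    set g0 := dist x (cstar j) with hg0_def
    set D' := dDiag (cstar j) with hD'_def
    have hsd : s = (x 1 - x 0)/Real.sqrt 2 := by
      rw [hs_def, dDiag_eq, abs_of_pos (by linarith)]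
    have hDd : D' = ((cstar j) 1 - (cstar j) 0)/Real.sqrt 2 := by
      rw [hD'_def, dDiag_eq, abs_of_pos (by linarith)]
    have hD'D : D ≤ D' := hcsD j
    have hD'pos : (0:ℝ) < D' := lt_of_lt_of_le hD hD'D
    have hg0nn : 0 ≤ g0 := dist_nonneg
    have hg0s : g0 < s := by
      have h := hxj.2.2 (Fin.last k) (Fin.castSucc_lt_last j)
      rwa [cdistC_castSucc, cdistC_last] at h
    have hslb : s ≤ dist x (c j) := by
      have h := hxlast.2.1 j.castSucc (Fin.castSucc_lt_last j)
      rwa [cdistC_castSucc, cdistC_last] at h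
    have htr : dist x (c j) ≤ g0 + dist (cstar j) (c j) := dist_triangle x (cstar j) (c j)
    have hsg0cb : s - g0 ≤ cbDist k cstar c := by linarith
    have hsL : s ≤ L := dDiag_le_of_ballA hL.le hx
    have hx10 : x 1 - x 0 = Real.sqrt 2 * s := by rw [hsd]; field_simp
    have ha10 : (cstar j) 1 - (cstar j) 0 = Real.sqrt 2 * D' := by rw [hDd]; field_simp
    have hg0sq : g0^2 = (x 0 - (cstar j) 0)^2 + (x 1 - (cstar j) 1)^2 := by
      rw [hg0_def, dist_eq2, Real.sq_sqrt (by positivity)]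
    have e1 : 2*(s-D')^2 = ((x 1 - (cstar j) 1) - (x 0 - (cstar j) 0))^2 := by
      have e0 : Real.sqrt 2*(s-D') = (x 1 - (cstar j) 1) - (x 0 - (cstar j) 0) := by
        rw [mul_sub, ← hx10, ← ha10]; ring
      calc 2*(s-D')^2 = (Real.sqrt 2*(s-D'))^2 := by rw [mul_pow, hr2]
        _ = _ := by rw [e0]
    have hK1 : (s - D')^2 ≤ g0^2 := by
      clear * - e1 hg0sq
      nlinarith [e1, hg0sq, sq_nonneg ((x 1 - (cstar j) 1) + (x 0 - (cstar j) 0))]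
    set t0 := (s^2 - g0^2)/(2*D') with ht0_def
    have ht0nn : 0 ≤ t0 := div_nonneg (by clear * - hg0s hg0nn; nlinarith) (by linarith)
    have ht2 : t0*(2*D') = s^2 - g0^2 := by
      rw [ht0_def]; field_simp
    have hst0 : t0 ≤ s - D'/2 := by
      rw [ht0_def, div_le_iff₀ (by linarith : (0:ℝ) < 2*D')]
      clear * - hK1 hD'pos
      nlinarith [hK1, hD'pos]
    have hst0' : 0 ≤ s - t0 := by linarith
    set u := t0 / Real.sqrt 2 with hu_def
    have hur : u * Real.sqrt 2 = t0 := div_mul_cancel₀ _ (ne_of_gt hr)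
    set y := mk2 (x 0 + u) (x 1 - u) with hy_def
    have hy0 : y 0 = x 0 + u := rfl
    have hy1 : y 1 = x 1 - u := rfl
    have hdxy : dist x y = t0 := by
      rw [dist_eq2, hy0, hy1, show (x 0 - (x 0 + u))^2 + (x 1 - (x 1 - u))^2 = t0^2 from by
        linear_combination (u*Real.sqrt 2 + t0)*hur + (-u^2)*hr2]
      exact Real.sqrt_sq ht0nn
    have hy10 : y 1 - y 0 = Real.sqrt 2*(s - t0) := by
      rw [hy1, hy0]
      linear_combination hx10 + (- Real.sqrt 2)*hur + u*hr2
    have hyd : dDiag y = s - t0 := by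
      rw [dDiag_eq, hy10, abs_of_nonneg (mul_nonneg hr.le hst0'), mul_comm]
      exact mul_div_cancel_right₀ _ (ne_of_gt hr)
    have hkeyeq : (y 0 - (cstar j) 0)^2 + (y 1 - (cstar j) 1)^2 = (s - t0)^2 := by
      rw [hy0, hy1]
      linear_combination (-1)*hg0sq + (-2*u)*hx10 + (2*u)*ha10 + ht2 + (-u^2)*hr2
        + (2*(D'-s)+u*Real.sqrt 2+t0)*hur
    have hdya : dist y (cstar j) = s - t0 := by
      rw [dist_eq2, hkeyeq, Real.sqrt_sq hst0']
    have hynot : y ∉ Vcell k cstar j.castSucc := by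
      intro hy
      have h := hy.2.2 (Fin.last k) (Fin.castSucc_lt_last j)
      rw [cdistC_castSucc, cdistC_last, hyd, hdya] at h
      exact lt_irrefl _ h
    have hfinal : t0 ≤ 7*L^2/(2*D^2)*cbDist k cstar c := by
      rw [ht0_def]
      exact key1 hL hD hDL hD'D hg0nn hg0s hsL hsg0cb hcb0
    calc Metric.infDist x (frontier (Vcell k cstar j.castSucc)) ≤ dist x y :=
          infDist_frontier_le hxj hynot
      _ = t0 := hdxy
      _ ≤ _ := hfinal
  · rintro ⟨hxlast, hxj⟩
    have hxO : x 0 < x 1 := hxlast.1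
    have haO : (cstar j) 0 < (cstar j) 1 := (hcs j).1
    set s := dDiag x with hs_def
    set g0 := dist x (cstar j) with hg0_def
    set D2 := dDiag (cstar j) with hD2_def
    have hsd : s = (x 1 - x 0)/Real.sqrt 2 := by
      rw [hs_def, dDiag_eq, abs_of_pos (by linarith)]
    have hDd : D2 = ((cstar j) 1 - (cstar j) 0)/Real.sqrt 2 := by
      rw [hD2_def, dDiag_eq, abs_of_pos (by linarith)]
    have hD2D : D ≤ D2 := hcsD j
    have hD2pos : (0:ℝ) < D2 := lt_of_lt_of_le hD hD2D
    have hg0s : s ≤ g0 := by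
      have h := hxlast.2.1 j.castSucc (Fin.castSucc_lt_last j)
      rwa [cdistC_castSucc, cdistC_last] at h
    have hbx : dist x (c j) < s := by
      have h := hxj.2.2 (Fin.last k) (Fin.castSucc_lt_last j)
      rwa [cdistC_castSucc, cdistC_last] at h
    have htr : g0 ≤ dist x (c j) + dist (cstar j) (c j) := by
      rw [hg0_def, dist_comm (cstar j) (c j)]
      exact dist_triangle x (c j) (cstar j)
    have hspos : 0 < s := lt_of_le_of_lt dist_nonneg hbx
    have hg0pos : 0 < g0 := lt_of_lt_of_le hspos hg0s
    have hgscb : g0 - s < cbDist k cstar c := by linarith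
    have hcbpos : 0 < cbDist k cstar c := by
      have : 0 < dist (cstar j) (c j) := by linarith
      linarith
    set B := 7*L^2/(2*D^2)*cbDist k cstar c with hB_def
    have hBpos : 0 < B := by
      have h1 : (0:ℝ) < 7*L^2/(2*D^2) := by positivity
      exact mul_pos h1 hcbpos
    set t := min B g0 with ht_def
    have htpos : 0 < t := lt_min hBpos hg0pos
    have htg0 : t ≤ g0 := min_le_right _ _
    have htB : t ≤ B := min_le_left _ _
    set lam := t / g0 with hlam_def
    have hlam : lam * g0 = t := div_mul_cancel₀ _ (ne_of_gt hg0pos)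
    have hlam0 : 0 ≤ lam := div_nonneg htpos.le hg0pos.le
    have hlam1 : lam ≤ 1 := (div_le_one hg0pos).2 htg0
    set y := mk2 (x 0 + lam*((cstar j) 0 - x 0)) (x 1 + lam*((cstar j) 1 - x 1)) with hy_def
    have hy0 : y 0 = x 0 + lam*((cstar j) 0 - x 0) := rfl
    have hy1 : y 1 = x 1 + lam*((cstar j) 1 - x 1) := rfl
    have hg0sq : g0^2 = (x 0 - (cstar j) 0)^2 + (x 1 - (cstar j) 1)^2 := by
      rw [hg0_def, dist_eq2, Real.sq_sqrt (by positivity)]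
    have hdxy : dist x y = t := by
      rw [dist_eq2, hy0, hy1, show (x 0 - (x 0 + lam*((cstar j) 0 - x 0)))^2
          + (x 1 - (x 1 + lam*((cstar j) 1 - x 1)))^2 = t^2 from by
        linear_combination (-lam^2)*hg0sq + (lam*g0+t)*hlam]
      exact Real.sqrt_sq htpos.le
    have hdya : dist y (cstar j) = g0 - t := by
      rw [dist_eq2, hy0, hy1, show (x 0 + lam*((cstar j) 0 - x 0) - (cstar j) 0)^2
          + (x 1 + lam*((cstar j) 1 - x 1) - (cstar j) 1)^2 = (g0-t)^2 from by
        linear_combination (-(1-lam)^2)*hg0sq + (-((1-lam)*g0 + g0 - t))*hlam]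
      exact Real.sqrt_sq (by linarith)
    have hx10 : x 1 - x 0 = Real.sqrt 2 * s := by rw [hsd]; field_simp
    have ha10 : (cstar j) 1 - (cstar j) 0 = Real.sqrt 2 * D2 := by rw [hDd]; field_simp
    have hy10 : y 1 - y 0 = Real.sqrt 2*(s + lam*(D2 - s)) := by
      rw [hy1, hy0]
      linear_combination (1-lam)*hx10 + lam*ha10
    have hcomb : 0 ≤ s + lam*(D2 - s) := by clear * - hlam0 hlam1 hspos hD2pos; nlinarith
    have hyd : dDiag y = s + lam*(D2-s) := by
      rw [dDiag_eq, hy10, abs_of_nonneg (mul_nonneg hr.le hcomb), mul_comm]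
      exact mul_div_cancel_right₀ _ (ne_of_gt hr)
    have hgL : g0 ≤ Real.sqrt 2 * L := dist_le_of_ballA hx (hcs j).2
    have hgL15 : g0 ≤ 1.5*L := by clear * - hgL hr15 hL; nlinarith [hgL, hr15, hL, dist_nonneg (x := x) (y := cstar j)]
    have hmul : g0*(g0 - s) < t*(D2 + g0 - s) := by
      rcases le_total B g0 with hcase|hcase
      · rw [ht_def, min_eq_left hcase]
        have hBD : B*(2*D^2) = 7*L^2*cbDist k cstar c := by
          rw [hB_def]; field_simp; try ring
        exact key2 hL hD hDL hD2D hspos hg0s hgL15 hgscb hcbpos hBD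
      · rw [ht_def, min_eq_right hcase]
        clear * - hg0pos hD2pos hspos hg0s
        nlinarith [mul_pos hg0pos hD2pos]
    have hkey : g0 - t < s + lam*(D2 - s) := by
      have e : (s + lam*(D2-s))*g0 = s*g0 + t*(D2-s) := by
        linear_combination (D2-s)*hlam
      have h2 : (g0 - t)*g0 < (s + lam*(D2-s))*g0 := by
        rw [e]
        clear * - hmul htpos hg0pos
        nlinarith [hmul, mul_pos htpos hg0pos]
      exact lt_of_mul_lt_mul_right h2 hg0pos.le
    have hynot : y ∉ Vcell k cstar (Fin.last k) := by
      intro hy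
      have h := hy.2.1 j.castSucc (Fin.castSucc_lt_last j)
      rw [cdistC_castSucc, cdistC_last, hyd, hdya] at h
      linarith
    calc Metric.infDist x (frontier (Vcell k cstar (Fin.last k))) ≤ dist x y :=
          infDist_frontier_le hxlast hynot
      _ = t := hdxy
      _ ≤ B := htB

end
end

section
/- Let B be a measurable space and let μ, ν be finite measures on B with μ(B) > 0 and ν(B) > 0. Set m := min(μ(B), ν(B)), μ̃ := μ/μ(B) and ν̃ := ν/ν(B). Then for every finite measurable partition 𝒮 of B, one has m·Σ_{S∈𝒮} |μ̃(S) − ν̃(S)| ≤ |μ(B) − ν(B)| + Σ_{S∈𝒮} |μ(S) − ν(S)|. Moreover, for every measurable S ⊆ B, m·|μ̃(S) − ν̃(S)| ≤ |μ(S) − ν(S)| + (min(μ(S), ν(S))/max(μ(B), ν(B)))·|μ(B) − ν(B)|. -/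
open MeasureTheory ENNReal Set

noncomputable section

lemma core15 (a b u v : ℝ) (ha : 0 < a) (hb : 0 < b) (hu : 0 ≤ u) (hv : 0 ≤ v) :
    min a b * |u / a - v / b| ≤ |u - v| + min u v / max a b * |a - b| := by
  have hmax : 0 < max a b := lt_max_of_lt_left ha
  have hab : min a b * max a b = a * b := min_mul_max a b
  have key : |u * b - a * v| ≤ max a b * |u - v| + min u v * |a - b| := by
    rcases le_total u v with h | h
    · have h1 : |u * b - a * v| ≤ a * |u - v| + u * |a - b| := by
        calc |u * b - a * v| = |a * (u - v) + u * (b - a)| := by ring_nf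
          _ ≤ |a * (u - v)| + |u * (b - a)| := abs_add_le _ _
          _ = a * |u - v| + u * |a - b| := by
              rw [abs_mul, abs_mul, abs_of_pos ha, abs_of_nonneg hu, abs_sub_comm b a]
      rw [min_eq_left h]
      have h2 : a * |u - v| ≤ max a b * |u - v| :=
        mul_le_mul_of_nonneg_right (le_max_left a b) (abs_nonneg _)
      linarith
    · have h1 : |u * b - a * v| ≤ b * |u - v| + v * |a - b| := by
        calc |u * b - a * v| = |b * (u - v) + v * (b - a)| := by ring_nf
          _ ≤ |b * (u - v)| + |v * (b - a)| := abs_add_le _ _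
          _ = b * |u - v| + v * |a - b| := by
              rw [abs_mul, abs_mul, abs_of_pos hb, abs_of_nonneg hv, abs_sub_comm b a]
      rw [min_eq_right h]
      have h2 : b * |u - v| ≤ max a b * |u - v| :=
        mul_le_mul_of_nonneg_right (le_max_right a b) (abs_nonneg _)
      linarith
  have e : min a b * |u / a - v / b| = |u * b - a * v| / max a b := by
    rw [div_sub_div _ _ ha.ne' hb.ne', abs_div, abs_of_pos (mul_pos ha hb), ← hab,
      mul_div_assoc', mul_div_mul_left _ _ (lt_min ha hb).ne']
  have e2 : |u - v| + min u v / max a b * |a - b|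
      = (max a b * |u - v| + min u v * |a - b|) / max a b := by
    field_simp
  rw [e, e2]
  exact (div_le_div_iff_of_pos_right hmax).mpr key

/-- Elementary comparison between normalized and unnormalized measures.
With `m = min(μ(B), ν(B))`, `μ̃ = μ/μ(B)`, `ν̃ = ν/ν(B)`: for every finite measurable
partition `𝒮` of `B`, `m Σ_{S∈𝒮} |μ̃(S) - ν̃(S)| ≤ |μ(B) - ν(B)| + Σ_{S∈𝒮} |μ(S) - ν(S)|`,
and for every measurable `S ⊆ B`,
`m |μ̃(S) - ν̃(S)| ≤ |μ(S) - ν(S)| + (min(μ(S),ν(S))/max(μ(B),ν(B))) |μ(B) - ν(B)|`. -/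
theorem statement15 {B : Type} [MeasurableSpace B] (μ ν : Measure B)
    [IsFiniteMeasure μ] [IsFiniteMeasure ν]
    (hμ : 0 < μ Set.univ) (hν : 0 < ν Set.univ) :
    (∀ 𝒮 : Finset (Set B), (∀ S ∈ 𝒮, MeasurableSet S) →
      ((𝒮 : Set (Set B)).PairwiseDisjoint id) → ⋃₀ (𝒮 : Set (Set B)) = Set.univ →
      (min (μ Set.univ) (ν Set.univ)).toReal *
          ∑ S ∈ 𝒮, |(μ S).toReal / (μ Set.univ).toReal -
                     (ν S).toReal / (ν Set.univ).toReal| ≤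
        |(μ Set.univ).toReal - (ν Set.univ).toReal| +
          ∑ S ∈ 𝒮, |(μ S).toReal - (ν S).toReal|) ∧
    (∀ S : Set B, MeasurableSet S →
      (min (μ Set.univ) (ν Set.univ)).toReal *
          |(μ S).toReal / (μ Set.univ).toReal - (ν S).toReal / (ν Set.univ).toReal| ≤
        |(μ S).toReal - (ν S).toReal| +
          (min (μ S) (ν S)).toReal / (max (μ Set.univ) (ν Set.univ)).toReal *
            |(μ Set.univ).toReal - (ν Set.univ).toReal|) := by
  set a := (μ Set.univ).toReal with ha_def
  set b := (ν Set.univ).toReal with hb_def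
  have ha : 0 < a := ENNReal.toReal_pos hμ.ne' (measure_ne_top μ _)
  have hb : 0 < b := ENNReal.toReal_pos hν.ne' (measure_ne_top ν _)
  have hmax : 0 < max a b := lt_max_of_lt_left ha
  have hminT : (min (μ Set.univ) (ν Set.univ)).toReal = min a b :=
    ENNReal.toReal_min (measure_ne_top μ _) (measure_ne_top ν _)
  have hmaxT : (max (μ Set.univ) (ν Set.univ)).toReal = max a b :=
    ENNReal.toReal_max (measure_ne_top μ _) (measure_ne_top ν _)
  constructor
  · intro 𝒮 hmeas hdisj hcover
    have hU : ⋃ S ∈ 𝒮, (id S : Set B) = Set.univ := by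
      simpa [Set.sUnion_eq_biUnion] using hcover
    have hsum_u : ∑ S ∈ 𝒮, (μ S).toReal = a := by
      rw [ha_def, ← hU, measure_biUnion_finset hdisj hmeas]
      simp only [id_eq]
      rw [ENNReal.toReal_sum (fun S _ => measure_ne_top μ S)]
    have hsum_v : ∑ S ∈ 𝒮, (ν S).toReal = b := by
      rw [hb_def, ← hU, measure_biUnion_finset hdisj hmeas]
      simp only [id_eq]
      rw [ENNReal.toReal_sum (fun S _ => measure_ne_top ν S)]
    have hsum_min : ∑ S ∈ 𝒮, min (μ S).toReal (ν S).toReal ≤ min a b := by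
      refine le_min ?_ ?_
      · rw [← hsum_u]; exact Finset.sum_le_sum fun S _ => min_le_left _ _
      · rw [← hsum_v]; exact Finset.sum_le_sum fun S _ => min_le_right _ _
    rw [hminT]
    calc min a b * ∑ S ∈ 𝒮, |(μ S).toReal / a - (ν S).toReal / b|
        = ∑ S ∈ 𝒮, min a b * |(μ S).toReal / a - (ν S).toReal / b| := Finset.mul_sum _ _ _
      _ ≤ ∑ S ∈ 𝒮, (|(μ S).toReal - (ν S).toReal|
            + min (μ S).toReal (ν S).toReal / max a b * |a - b|) :=
          Finset.sum_le_sum fun S _ =>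
            core15 a b _ _ ha hb ENNReal.toReal_nonneg ENNReal.toReal_nonneg
      _ = (∑ S ∈ 𝒮, |(μ S).toReal - (ν S).toReal|)
            + (∑ S ∈ 𝒮, min (μ S).toReal (ν S).toReal) * (|a - b| / max a b) := by
          rw [Finset.sum_add_distrib, Finset.sum_mul]
          congr 1
          exact Finset.sum_congr rfl fun S _ => by ring
      _ ≤ (∑ S ∈ 𝒮, |(μ S).toReal - (ν S).toReal|) + |a - b| := by
          have h1 : (∑ S ∈ 𝒮, min (μ S).toReal (ν S).toReal) * (|a - b| / max a b)
              ≤ max a b * (|a - b| / max a b) :=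
            mul_le_mul_of_nonneg_right
              (hsum_min.trans (min_le_max)) (by positivity)
          have h2 : max a b * (|a - b| / max a b) = |a - b| := by
            field_simp
          linarith
      _ = |a - b| + ∑ S ∈ 𝒮, |(μ S).toReal - (ν S).toReal| := by ring
  · intro S _
    rw [hminT, hmaxT, ENNReal.toReal_min (measure_ne_top μ _) (measure_ne_top ν _)]
    exact core15 a b _ _ ha hb ENNReal.toReal_nonneg ENNReal.toReal_nonneg

end
end
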